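/- arXiv:1101.1962 — 8 statements merged into one kernel-verified Lean document; each statement's English description precedes it below -/
import Mathlib

section
/- Let m ≥ 1 and n be natural numbers, let F₂ = ZMod 2, and let λ be the 2m × 2m block matrix over F₂ given by λ = fromBlocks 0 1 1 0 (with m × m blocks). Let ω be an n × n matrix over F₂ with rank(ω) = 2m. If P₁ and P₂ are 2m × n matrices over F₂ satisfying P₁ᵀ · λ · P₁ = ω and P₂ᵀ · λ · P₂ = ω, then there exists a 2m × 2m matrix S over F₂ with Sᵀ · λ · S = λ and P₁ = S · P₂. (Uniqueness, up to symplectic transformation, of the minimal realization of a commutation-relation matrix by Pauli operators.) -/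
open Matrix

/-- Uniqueness, up to symplectic transformation, of the minimal realization of a
commutation-relation matrix by Pauli operators. -/
theorem minimal_realization_unique_up_to_symplectic (m n : ℕ) (hm : 1 ≤ m)
    (ω : Matrix (Fin n) (Fin n) (ZMod 2)) (hω : ω.rank = 2 * m)
    (P₁ P₂ : Matrix (Fin m ⊕ Fin m) (Fin n) (ZMod 2))
    (h₁ : P₁ᵀ * (Matrix.fromBlocks 0 1 1 0 : Matrix (Fin m ⊕ Fin m) (Fin m ⊕ Fin m) (ZMod 2)) * P₁ = ω)
    (h₂ : P₂ᵀ * (Matrix.fromBlocks 0 1 1 0 : Matrix (Fin m ⊕ Fin m) (Fin m ⊕ Fin m) (ZMod 2)) * P₂ = ω) :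
    ∃ S : Matrix (Fin m ⊕ Fin m) (Fin m ⊕ Fin m) (ZMod 2),
      Sᵀ * Matrix.fromBlocks 0 1 1 0 * S = Matrix.fromBlocks 0 1 1 0 ∧ P₁ = S * P₂ := by
  set L : Matrix (Fin m ⊕ Fin m) (Fin m ⊕ Fin m) (ZMod 2) := Matrix.fromBlocks 0 1 1 0 with hL
  have hcard : Fintype.card (Fin m ⊕ Fin m) = 2 * m := by
    simp [Fintype.card_sum, two_mul]
  -- every realization has full rank 2*m
  have hrank : ∀ P : Matrix (Fin m ⊕ Fin m) (Fin n) (ZMod 2),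
      Pᵀ * L * P = ω → P.rank = 2 * m := by
    intro P hP
    have h1 : P.rank ≤ 2 * m := hcard ▸ P.rank_le_card_height
    have h2 : 2 * m ≤ P.rank := by
      calc 2 * m = ω.rank := hω.symm
        _ = ((Pᵀ * L) * P).rank := by rw [hP]
        _ ≤ P.rank := Matrix.rank_mul_le_right _ _
    omega
  -- kernels of realizations coincide with the kernel of ω
  have hker : ∀ P : Matrix (Fin m ⊕ Fin m) (Fin n) (ZMod 2),
      Pᵀ * L * P = ω → LinearMap.ker P.mulVecLin = LinearMap.ker ω.mulVecLin := by
    intro P hP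
    have hle : LinearMap.ker P.mulVecLin ≤ LinearMap.ker ω.mulVecLin := by
      intro x hx
      simp only [LinearMap.mem_ker, Matrix.mulVecLin_apply] at hx ⊢
      rw [← hP, ← Matrix.mulVec_mulVec, hx, Matrix.mulVec_zero]
    have e1 : P.rank + Module.finrank (ZMod 2) (LinearMap.ker P.mulVecLin) = n := by
      have := LinearMap.finrank_range_add_finrank_ker P.mulVecLin
      simpa [Matrix.rank] using this
    have e2 : ω.rank + Module.finrank (ZMod 2) (LinearMap.ker ω.mulVecLin) = n := by
      have := LinearMap.finrank_range_add_finrank_ker ω.mulVecLin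
      simpa [Matrix.rank] using this
    refine Submodule.eq_of_le_of_finrank_eq hle ?_
    rw [hrank P hP] at e1
    rw [hω] at e2
    omega
  -- P₂ has a right inverse
  have hsurj : Function.Surjective P₂.mulVecLin := by
    rw [← LinearMap.range_eq_top]
    apply Submodule.eq_top_of_finrank_eq
    have : Module.finrank (ZMod 2) (Fin m ⊕ Fin m → ZMod 2) = 2 * m := by
      rw [Module.finrank_pi, hcard]
    rw [this]
    exact hrank P₂ h₂
  obtain ⟨g, hg⟩ := P₂.mulVecLin.exists_rightInverse_of_surjective
    (LinearMap.range_eq_top.2 hsurj)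
  set Q : Matrix (Fin n) (Fin m ⊕ Fin m) (ZMod 2) := LinearMap.toMatrix' g with hQ
  have hQg : Q.mulVecLin = g := by
    ext x
    simp [hQ, Matrix.mulVecLin_apply, ← Matrix.toLin'_apply, Matrix.toLin'_toMatrix']
  have hPQ : P₂ * Q = 1 := by
    have h : (P₂ * Q).mulVecLin = (1 : Matrix (Fin m ⊕ Fin m) (Fin m ⊕ Fin m) (ZMod 2)).mulVecLin := by
      rw [Matrix.mulVecLin_mul, hQg, hg, Matrix.mulVecLin_one]
    ext i j
    have := congrArg (fun f => f (fun k => if k = j then 1 else 0) i) h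
    simpa [Matrix.mulVecLin_apply, Matrix.mulVec, dotProduct,
      Matrix.one_apply, Matrix.mul_apply] using this
  refine ⟨P₁ * Q, ?_, ?_⟩
  · calc (P₁ * Q)ᵀ * L * (P₁ * Q) = Qᵀ * (P₁ᵀ * L * P₁) * Q := by
          rw [Matrix.transpose_mul]; simp only [Matrix.mul_assoc]
      _ = Qᵀ * (P₂ᵀ * L * P₂) * Q := by rw [h₁, h₂]
      _ = (P₂ * Q)ᵀ * L * (P₂ * Q) := by rw [Matrix.transpose_mul]; simp only [Matrix.mul_assoc]
      _ = L := by rw [hPQ]; simp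
  · -- P₁ = P₁ * Q * P₂ : use that ker P₂ = ker P₁
    have hkk : LinearMap.ker P₂.mulVecLin = LinearMap.ker P₁.mulVecLin := by
      rw [hker P₂ h₂, hker P₁ h₁]
    have hmv : ∀ x : Fin n → ZMod 2, (P₁ * Q * P₂).mulVec x = P₁.mulVec x := by
      intro x
      have hmem : Q.mulVec (P₂.mulVec x) - x ∈ LinearMap.ker P₂.mulVecLin := by
        simp only [LinearMap.mem_ker, Matrix.mulVecLin_apply]
        rw [Matrix.mulVec_sub, Matrix.mulVec_mulVec, hPQ, Matrix.one_mulVec, sub_self]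
      rw [hkk] at hmem
      simp only [LinearMap.mem_ker, Matrix.mulVecLin_apply, Matrix.mulVec_sub,
        sub_eq_zero] at hmem
      calc (P₁ * Q * P₂).mulVec x = P₁.mulVec (Q.mulVec (P₂.mulVec x)) := by
            rw [← Matrix.mulVec_mulVec, ← Matrix.mulVec_mulVec]
        _ = P₁.mulVec x := hmem
    ext i j
    have := congrArg (fun v => v i) (hmv (fun k => if k = j then 1 else 0))
    simpa [Matrix.mulVec, dotProduct] using this.symm
end

section
/- Let D ≥ 1, q ≥ 1, r ≥ 2 be integers and let G be a finite set of finitely supported functions g : ℤᴰ → F₂^(2q), each supported inside the cube {0,…,r−1}ᴰ, such that ⟨Tᵤg, Tᵥh⟩ = 0 for all g, h ∈ G and all u, v ∈ ℤᴰ (the stabilizer generators and all their translates pairwise commute). Suppose for some L₀ ≥ 1 there exists O : (ZMod L₀)ᴰ → F₂^(2q) such that ⟨O, ḡᵤ⟩ = 0 for every folded generator ḡᵤ (g ∈ G, u ∈ (ZMod L₀)ᴰ), O is not in the F₂-span of the folded generators, and |supp(O)| · (r−1) < L₀. Then there exists a finitely supported Õ : ℤᴰ → F₂^(2q) with ⟨Õ,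 Tᵤg⟩ = 0 for all g ∈ G and u ∈ ℤᴰ, such that Õ is not a finite F₂-linear combination of the translates {Tᵤg : g ∈ G, u ∈ ℤᴰ}. -/
namespace FiniteLogical

variable (D q : ℕ)

/-- Sites of the infinite lattice `ℤᴰ`. -/
abbrev Site (D : ℕ) := Fin D → ℤ

/-- The local Pauli label space `F₂^(2q)`, encoded as `q` pairs `(x_i, z_i)`. -/
abbrev V (q : ℕ) := Fin q → ZMod 2 × ZMod 2

/-- A finite Pauli operator: a finitely supported function `ℤᴰ → F₂^(2q)`. -/
abbrev PauliInf (D q : ℕ) := Site D →₀ V q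

/-- The commutation pairing on the infinite lattice:
`⟨v,w⟩ = Σ_s Σ_i (x_i(s)·z'_i(s) + z_i(s)·x'_i(s))`. -/
def pairInf (v w : PauliInf D q) : ZMod 2 :=
  v.sum fun s a => ∑ i : Fin q, ((a i).1 * (w s i).2 + (a i).2 * (w s i).1)

/-- Translation by `u ∈ ℤᴰ`: `(Tᵤ g)(s) = g(s − u)`. -/
noncomputable def T (u : Site D) (g : PauliInf D q) : PauliInf D q :=
  Finsupp.mapDomain (fun s => s + u) g

/-- Sites of the torus `(ZMod L)ᴰ`. -/
abbrev TorSite (D L : ℕ) := Fin D → ZMod L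

/-- A Pauli operator on the torus. -/
abbrev PauliTor (D q L : ℕ) := TorSite D L → V q

/-- The reduction map `π : ℤᴰ → (ZMod L)ᴰ`. -/
def π (L : ℕ) (s : Site D) : TorSite D L := fun i => (s i : ZMod L)

/-- Folding a finite Pauli operator onto the torus: `ḡ(s̄) = Σ_{π(s) = s̄} g(s)`. -/
def fold (L : ℕ) (g : PauliInf D q) : PauliTor D q L :=
  fun t => g.sum fun s a => if π D L s = t then a else 0

/-- The folded generator `ḡᵤ` for `u ∈ (ZMod L)ᴰ`: the folding of any translate of `g`
by a representative of `u`, i.e. `ḡᵤ(s̄) = (fold g)(s̄ − u)`. -/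
def foldedGen (L : ℕ) (g : PauliInf D q) (u : TorSite D L) : PauliTor D q L :=
  fun t => fold D q L g (t - u)

/-- The commutation pairing on the torus. -/
def pairTor (L : ℕ) [NeZero L] (v w : PauliTor D q L) : ZMod 2 :=
  ∑ t : TorSite D L, ∑ i : Fin q, ((v t i).1 * (w t i).2 + (v t i).2 * (w t i).1)

end FiniteLogical

open FiniteLogical


section Aux

open Finsupp

variable (D q : ℕ)

/-- The symplectic-type pairing on the local label space. -/
def symV (a b : V q) : ZMod 2 := ∑ i : Fin q, ((a i).1 * (b i).2 + (a i).2 * (b i).1)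

lemma symV_zero_right (a : V q) : symV q a 0 = 0 := by simp [symV]

lemma symV_zero_left (b : V q) : symV q 0 b = 0 := by simp [symV]

lemma pairInf_eq (v w : PauliInf D q) :
    pairInf D q v w = ∑ s ∈ v.support, symV q (v s) (w s) := rfl

lemma pairTor_eq (L : ℕ) [NeZero L] (v w : PauliTor D q L) :
    pairTor D q L v w = ∑ t : TorSite D L, symV q (v t) (w t) := rfl

lemma T_apply (u : Site D) (g : PauliInf D q) (s : Site D) : T D q u g s = g (s - u) := by
  classical
  have hinj : Function.Injective (fun s : Site D => s + u) := fun a b h => by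
    simpa using h
  have h := Finsupp.mapDomain_apply hinj g (s - u)
  simpa [T] using h

lemma pi_add (L : ℕ) (s u : Site D) : π D L (s + u) = π D L s + π D L u := by
  funext i; simp [π]

lemma pi_sub (L : ℕ) (s u : Site D) : π D L (s - u) = π D L s - π D L u := by
  funext i; simp [π]

lemma int_congr (L : ℕ) [NeZero L] {a b : ℤ} (h : ((a : ZMod L) = (b : ZMod L)))
    (h1 : -(L : ℤ) < a - b) (h2 : a - b < L) : a = b := by
  have hd : (L : ℤ) ∣ b - a := ((ZMod.intCast_eq_intCast_iff a b L).mp h).dvd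
  obtain ⟨k, hk⟩ := hd
  have hL : (0 : ℤ) < L := by exact_mod_cast Nat.pos_of_ne_zero (NeZero.ne L)
  have hk0 : k = 0 := by nlinarith
  rw [hk0, mul_zero] at hk
  linarith

/-- `fold` as a linear map. -/
noncomputable def foldLin (L : ℕ) : PauliInf D q →ₗ[ZMod 2] PauliTor D q L where
  toFun g := fold D q L g
  map_add' g h := by
    classical
    funext t
    show (g + h).sum (fun s a => if π D L s = t then a else 0)
        = g.sum (fun s a => if π D L s = t then a else 0)
          + h.sum (fun s a => if π D L s = t then a else 0)
    exact Finsupp.sum_add_index' (fun a => ite_self 0) (fun a b₁ b₂ => by split <;> simp)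
  map_smul' c g := by
    classical
    have hc : c = 0 ∨ c = 1 := by revert c; decide
    rcases hc with rfl | rfl
    · simp only [zero_smul, RingHom.id_apply]
      funext t
      show (0 : PauliInf D q).sum (fun s a => if π D L s = t then a else 0) = _
      simp
    · simp only [one_smul, RingHom.id_apply]

lemma foldLin_apply (L : ℕ) (g : PauliInf D q) : foldLin D q L g = fold D q L g := rfl

lemma fold_T (L : ℕ) (u : Site D) (g : PauliInf D q) :
    fold D q L (T D q u g) = foldedGen D q L g (π D L u) := by
  classical
  funext t
  show (Finsupp.mapDomain (fun s => s + u) g).sum (fun s a => if π D L s = t then a else 0)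
      = fold D q L g (t - π D L u)
  have h1 : (Finsupp.mapDomain (fun s => s + u) g).sum (fun s a => if π D L s = t then a else 0)
      = g.sum fun s a => if π D L (s + u) = t then a else 0 :=
    Finsupp.sum_mapDomain_index (fun b => ite_self 0) (fun b m₁ m₂ => by split <;> simp)
  rw [h1]
  unfold fold
  refine Finsupp.sum_congr fun s _ => ?_
  refine if_congr ?_ rfl rfl
  rw [pi_add]
  exact (eq_sub_iff_add_eq).symm

/-- shift on the torus as a linear map. -/
def shiftLin (L : ℕ) (c : TorSite D L) : PauliTor D q L →ₗ[ZMod 2] PauliTor D q L where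
  toFun w := fun t => w (t - c)
  map_add' _ _ := rfl
  map_smul' _ _ := rfl

end Aux

/-- If a translation-invariant local stabilizer code on `ℤᴰ` (generators `G`, each
supported in the cube `{0,…,r−1}ᴰ`, with all translates pairwise commuting) has, on
some torus `(ZMod L₀)ᴰ`, a logical operator `O` that is not spanned by the folded
generators and satisfies `|supp(O)|·(r−1) < L₀`, then on the infinite lattice there is
a finite logical operator that is not a finite combination of the translated
generators. -/
theorem finite_nontrivial_logical_of_small_torus_distance
    (D q r : ℕ) (hD : 1 ≤ D) (hq : 1 ≤ q) (hr : 2 ≤ r)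
    (G : Finset (PauliInf D q))
    (hsupp : ∀ g ∈ G, ∀ s : Site D, g s ≠ 0 → ∀ i : Fin D, 0 ≤ s i ∧ s i < (r : ℤ))
    (hcomm : ∀ g ∈ G, ∀ h ∈ G, ∀ u v : Site D, pairInf D q (T D q u g) (T D q v h) = 0)
    (L₀ : ℕ) [NeZero L₀] (hL₀ : 1 ≤ L₀)
    (O : PauliTor D q L₀)
    (hOlog : ∀ g ∈ G, ∀ u : TorSite D L₀, pairTor D q L₀ O (foldedGen D q L₀ g u) = 0)
    (hOnontriv : O ∉ Submodule.span (ZMod 2)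
      {w : PauliTor D q L₀ | ∃ g ∈ G, ∃ u : TorSite D L₀, w = foldedGen D q L₀ g u})
    (hOsmall : Set.ncard {t : TorSite D L₀ | O t ≠ 0} * (r - 1) < L₀) :
    ∃ O' : PauliInf D q,
      (∀ g ∈ G, ∀ u : Site D, pairInf D q O' (T D q u g) = 0) ∧
      O' ∉ Submodule.span (ZMod 2)
        {w : PauliInf D q | ∃ g ∈ G, ∃ u : Site D, w = T D q u g} := by
  classical
  -- the support of `O` is nonempty
  have hO0 : ∃ t, O t ≠ 0 := by
    by_contra h
    push_neg at h
    have hO : O = 0 := funext fun t => h t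
    exact hOnontriv (hO ▸ Submodule.zero_mem _)
  set m := Set.ncard {t : TorSite D L₀ | O t ≠ 0} with hm
  have hmfin : {t : TorSite D L₀ | O t ≠ 0}.Finite := Set.toFinite _
  have hm1 : 1 ≤ m := by
    obtain ⟨t, ht⟩ := hO0
    have := (Set.ncard_pos hmfin).mpr ⟨t, ht⟩
    omega
  have hr1L : r - 1 < L₀ := by
    have h := Nat.mul_le_mul_right (r - 1) hm1
    omega
  have hrL : r ≤ L₀ := by omega
  -- choose a gap in each coordinate direction
  have gap : ∀ i : Fin D, ∃ b : ZMod L₀, ∀ j : ℕ, 1 ≤ j → j ≤ r - 1 →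
      ∀ t : TorSite D L₀, O t ≠ 0 → t i ≠ b + (j : ZMod L₀) := by
    intro i
    set S : Finset (ZMod L₀) := hmfin.toFinset.image (fun t => t i) with hS
    set B : Finset (ZMod L₀) := S.biUnion
      (fun s => (Finset.Icc 1 (r-1)).image (fun j : ℕ => s - (j : ZMod L₀))) with hB
    have hScard : S.card ≤ m := by
      refine le_trans Finset.card_image_le ?_
      rw [hm, Set.ncard_eq_toFinset_card _ hmfin]
    have hIcc : (Finset.Icc 1 (r-1)).card = r - 1 := by rw [Nat.card_Icc]; omega
    have hBcard : B.card ≤ m * (r - 1) := by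
      refine le_trans Finset.card_biUnion_le ?_
      refine le_trans (Finset.sum_le_sum fun s _ => Finset.card_image_le) ?_
      rw [Finset.sum_const, hIcc, smul_eq_mul]
      exact Nat.mul_le_mul_right _ hScard
    have hBne : ∃ b : ZMod L₀, b ∉ B := by
      by_contra h
      push_neg at h
      have hBu : B = Finset.univ := Finset.eq_univ_iff_forall.mpr h
      have hcard : B.card = L₀ := by rw [hBu, Finset.card_univ, ZMod.card]
      omega
    obtain ⟨b, hb⟩ := hBne
    refine ⟨b, fun j hj1 hj2 t ht heq => hb ?_⟩
    refine Finset.mem_biUnion.mpr ⟨t i, Finset.mem_image.mpr ⟨t, hmfin.mem_toFinset.mpr ht, rfl⟩, ?_⟩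
    refine Finset.mem_image.mpr ⟨j, Finset.mem_Icc.mpr ⟨hj1, hj2⟩, ?_⟩
    rw [heq]; ring
  choose b hb using gap
  set c : TorSite D L₀ := fun i => b i + (r : ZMod L₀) with hc
  set O₂ : PauliTor D q L₀ := fun t => O (t + c) with hO₂def
  -- the shifted operator has support away from the seam
  have hO2supp : ∀ t : TorSite D L₀, O₂ t ≠ 0 → ∀ i, (t i).val ≤ L₀ - r := by
    intro t ht i
    by_contra hlt
    push_neg at hlt
    have ht' : O (t + c) ≠ 0 := by simpa [hO₂def] using ht
    have hvlt : (t i).val < L₀ := ZMod.val_lt _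
    set v := (t i).val with hv
    have htiv : t i = -(((L₀ - v : ℕ) : ZMod L₀)) := by
      have h1 : ((v : ℕ) : ZMod L₀) = t i := by
        rw [hv, ZMod.natCast_val, ZMod.cast_id]
      have h2 : ((v : ℕ) : ZMod L₀) + ((L₀ - v : ℕ) : ZMod L₀) = 0 := by
        rw [← Nat.cast_add]
        have hvL : v + (L₀ - v) = L₀ := by omega
        rw [hvL, ZMod.natCast_self]
      rw [← h1]
      exact eq_neg_of_add_eq_zero_left h2
    refine hb i (r - (L₀ - v)) (by omega) (by omega) (t + c) ht' ?_
    have h3 : ((r - (L₀ - v) : ℕ) : ZMod L₀) = (r : ZMod L₀) - ((L₀ - v : ℕ) : ZMod L₀) :=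
      Nat.cast_sub (by omega)
    show t i + c i = b i + ((r - (L₀ - v) : ℕ) : ZMod L₀)
    rw [htiv, h3]
    simp only [hc]
    ring
  -- the canonical lift
  set lift : TorSite D L₀ → Site D := fun t i => ((t i).val : ℤ) with hliftdef
  have hval : ∀ a : ℤ, 0 ≤ a → a < (L₀ : ℤ) → (((a : ZMod L₀)).val : ℤ) = a := by
    intro a h1 h2
    rw [ZMod.val_intCast]
    exact Int.emod_eq_of_lt h1 h2
  have hπlift : ∀ t : TorSite D L₀, π D L₀ (lift t) = t := by
    intro t; funext i
    show (((((t i).val : ℤ)) : ZMod L₀)) = t i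
    push_cast
    rw [ZMod.natCast_val, ZMod.cast_id]
  set fO : Site D → V q :=
    fun s => if (∀ i, 0 ≤ s i ∧ s i < (L₀ : ℤ)) then O₂ (π D L₀ s) else 0 with hfOdef
  have hfOsupp : ∀ s, fO s ≠ 0 →
      s ∈ Fintype.piFinset (fun _ : Fin D => Finset.Icc (0:ℤ) ((L₀:ℤ) - 1)) := by
    intro s hs
    rw [Fintype.mem_piFinset]
    intro i
    rw [Finset.mem_Icc]
    simp only [hfOdef] at hs
    by_cases h : ∀ i, 0 ≤ s i ∧ s i < (L₀ : ℤ)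
    · have := h i; omega
    · rw [if_neg h] at hs; exact absurd rfl hs
  set Ot : PauliInf D q := Finsupp.onFinset _ fO hfOsupp with hOtdef
  have hOtapply : ∀ s, Ot s = fO s := fun s => rfl
  have hOtlift : ∀ t, Ot (lift t) = O₂ t := by
    intro t
    rw [hOtapply]
    simp only [hfOdef]
    have hcond : ∀ i, 0 ≤ lift t i ∧ lift t i < (L₀ : ℤ) := by
      intro i
      refine ⟨Int.ofNat_nonneg _, ?_⟩
      show (((t i).val : ℤ)) < (L₀ : ℤ)
      exact_mod_cast ZMod.val_lt (t i)
    rw [if_pos hcond, hπlift]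
  have hOtcond : ∀ σ, Ot σ ≠ 0 →
      (∀ i, 0 ≤ σ i ∧ σ i < (L₀:ℤ)) ∧ Ot σ = O₂ (π D L₀ σ) := by
    intro σ hσ
    rw [hOtapply] at hσ ⊢
    simp only [hfOdef] at hσ ⊢
    by_cases h : ∀ i, 0 ≤ σ i ∧ σ i < (L₀ : ℤ)
    · exact ⟨h, by rw [if_pos h]⟩
    · rw [if_neg h] at hσ; exact absurd rfl hσ
  have hliftπ : ∀ σ : Site D, (∀ i, 0 ≤ σ i ∧ σ i < (L₀:ℤ)) → lift (π D L₀ σ) = σ := by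
    intro σ h
    funext i
    show ((((σ i : ℤ) : ZMod L₀)).val : ℤ) = σ i
    exact hval _ (h i).1 (h i).2
  have hliftOt : ∀ σ, Ot σ ≠ 0 → lift (π D L₀ σ) = σ :=
    fun σ h => hliftπ σ (hOtcond σ h).1
  have hOtbox : ∀ σ, Ot σ ≠ 0 → ∀ i, 0 ≤ σ i ∧ σ i ≤ (L₀:ℤ) - r := by
    intro σ hσ i
    obtain ⟨hcond, happ⟩ := hOtcond σ hσ
    have hO2 : O₂ (π D L₀ σ) ≠ 0 := happ ▸ hσ
    have hv := hO2supp _ hO2 i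
    have hvi : (((π D L₀ σ i).val : ℤ)) = σ i := hval (σ i) (hcond i).1 (hcond i).2
    refine ⟨(hcond i).1, ?_⟩
    omega
  -- folding Ot recovers O₂
  have hfold : foldLin D q L₀ Ot = O₂ := by
    funext t
    rw [foldLin_apply]
    show Ot.sum (fun s a => if π D L₀ s = t then a else 0) = O₂ t
    rw [Finsupp.sum]
    have h1 : ∀ σ ∈ Ot.support,
        (if π D L₀ σ = t then Ot σ else 0) = (if σ = lift t then Ot σ else 0) := by
      intro σ hσ
      refine if_congr ?_ rfl rfl
      have hne := Finsupp.mem_support_iff.mp hσ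
      constructor
      · intro h; rw [← hliftOt σ hne, h]
      · rintro rfl; exact hπlift t
    rw [Finset.sum_congr rfl h1, Finset.sum_ite_eq' Ot.support (lift t) (fun σ => Ot σ)]
    by_cases h : lift t ∈ Ot.support
    · rw [if_pos h, hOtlift]
    · rw [if_neg h, ← hOtlift t]
      exact (Finsupp.notMem_support_iff.mp h).symm
  -- the shifted operator is still logical on the torus
  have hO2log : ∀ g ∈ G, ∀ w : TorSite D L₀,
      pairTor D q L₀ O₂ (foldedGen D q L₀ g w) = 0 := by
    intro g hg w
    have h0 := hOlog g hg (w + c)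
    rw [pairTor_eq] at h0 ⊢
    rw [← h0, ← Equiv.sum_comp (Equiv.addRight c)
      (fun t => symV q (O t) (foldedGen D q L₀ g (w + c) t))]
    refine Finset.sum_congr rfl fun t _ => ?_
    show symV q (O₂ t) (foldedGen D q L₀ g w t)
        = symV q (O (t + c)) (foldedGen D q L₀ g (w + c) (t + c))
    have h3 : foldedGen D q L₀ g (w + c) (t + c) = foldedGen D q L₀ g w t := by
      show fold D q L₀ g (t + c - (w + c)) = fold D q L₀ g (t - w)
      congr 1
      abel
    rw [h3]
  -- pairing vanishes for badly-placed translates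
  have key0 : ∀ g ∈ G, ∀ u' : Site D,
      (∃ i, u' i < -((r:ℤ) - 1) ∨ (L₀:ℤ) - r < u' i) → pairInf D q Ot (T D q u' g) = 0 := by
    intro g hg u' hi'
    obtain ⟨i, hi⟩ := hi'
    rw [pairInf_eq]
    refine Finset.sum_eq_zero fun σ hσ => ?_
    rw [T_apply]
    have hσb := hOtbox σ (Finsupp.mem_support_iff.mp hσ) i
    have hg0 : g (σ - u') = 0 := by
      by_contra hgne
      have h1 := hsupp g hg _ hgne i
      simp only [Pi.sub_apply] at h1
      rcases hi with h | h <;> omega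
    rw [hg0, symV_zero_right]
  -- pairing matches the torus pairing for well-placed translates
  have key : ∀ g ∈ G, ∀ u' : Site D,
      (∀ i, -((r:ℤ) - 1) ≤ u' i ∧ u' i ≤ (L₀:ℤ) - r) →
      pairInf D q Ot (T D q u' g) = pairTor D q L₀ O₂ (foldedGen D q L₀ g (π D L₀ u')) := by
    intro g hg u' hu'
    have hstep1 : ∀ t : TorSite D L₀, O₂ t ≠ 0 →
        foldedGen D q L₀ g (π D L₀ u') t = g (lift t - u') := by
      intro t ht
      show fold D q L₀ g (t - π D L₀ u') = g (lift t - u')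
      have hiff : ∀ s ∈ g.support, (π D L₀ s = t - π D L₀ u') ↔ s = lift t - u' := by
        intro s hs
        constructor
        · intro h
          have h2 : π D L₀ s = π D L₀ (lift t - u') := by rw [h, pi_sub, hπlift]
          funext i
          have h3 : ((s i : ℤ) : ZMod L₀) = (((lift t - u') i : ℤ) : ZMod L₀) := congrFun h2 i
          have hsb := hsupp g hg s (Finsupp.mem_support_iff.mp hs) i
          have hvb0 : (0:ℤ) ≤ lift t i := Int.ofNat_nonneg _
          have hvb1 : lift t i ≤ (L₀:ℤ) - r := by
            have hv := hO2supp t ht i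
            show (((t i).val : ℤ)) ≤ (L₀:ℤ) - r
            omega
          have hub := hu' i
          refine int_congr L₀ h3 ?_ ?_ <;> simp only [Pi.sub_apply] <;> omega
        · rintro rfl
          rw [pi_sub, hπlift]
      show g.sum (fun s a => if π D L₀ s = t - π D L₀ u' then a else 0) = g (lift t - u')
      rw [Finsupp.sum, Finset.sum_congr rfl (fun s hs => if_congr (hiff s hs) rfl rfl),
        Finset.sum_ite_eq' g.support (lift t - u') (fun s => g s)]
      by_cases h : lift t - u' ∈ g.support
      · rw [if_pos h]
      · rw [if_neg h]; exact (Finsupp.notMem_support_iff.mp h).symm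
    rw [pairInf_eq, pairTor_eq]
    have hL : ∀ σ ∈ Ot.support,
        symV q (Ot σ) (T D q u' g σ) = symV q (O₂ (π D L₀ σ)) (g (σ - u')) := by
      intro σ hσ
      rw [T_apply, (hOtcond σ (Finsupp.mem_support_iff.mp hσ)).2]
    rw [Finset.sum_congr rfl hL]
    rw [show (∑ t : TorSite D L₀, symV q (O₂ t) (foldedGen D q L₀ g (π D L₀ u') t))
        = ∑ t ∈ Finset.univ.filter (fun t : TorSite D L₀ => O₂ t ≠ 0),
            symV q (O₂ t) (foldedGen D q L₀ g (π D L₀ u') t) from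
      (Finset.sum_subset (Finset.filter_subset _ Finset.univ) (fun t _ ht => by
        have h0 : O₂ t = 0 := by simpa using ht
        rw [h0, symV_zero_left])).symm]
    have hR2 : (∑ t ∈ Finset.univ.filter (fun t : TorSite D L₀ => O₂ t ≠ 0),
            symV q (O₂ t) (foldedGen D q L₀ g (π D L₀ u') t))
        = ∑ t ∈ Finset.univ.filter (fun t : TorSite D L₀ => O₂ t ≠ 0),
            symV q (O₂ t) (g (lift t - u')) :=
      Finset.sum_congr rfl fun t ht => by rw [hstep1 t (Finset.mem_filter.mp ht).2]
    rw [hR2]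
    refine Finset.sum_nbij' (fun σ => π D L₀ σ) (fun t => lift t) ?_ ?_ ?_ ?_ ?_
    · intro σ hσ
      simp only [Finset.mem_filter, Finset.mem_univ, true_and]
      rw [← (hOtcond σ (Finsupp.mem_support_iff.mp hσ)).2]
      exact Finsupp.mem_support_iff.mp hσ
    · intro t ht
      simp only [Finset.mem_filter, Finset.mem_univ, true_and] at ht
      rw [Finsupp.mem_support_iff, hOtlift]
      exact ht
    · intro σ hσ; exact hliftOt σ (Finsupp.mem_support_iff.mp hσ)
    · intro t _; exact hπlift t
    · intro σ hσ
      rw [hliftOt σ (Finsupp.mem_support_iff.mp hσ)]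
  refine ⟨Ot, ?_, ?_⟩
  · intro g hg u'
    by_cases hJ : ∀ i, -((r:ℤ) - 1) ≤ u' i ∧ u' i ≤ (L₀:ℤ) - r
    · rw [key g hg u' hJ]
      exact hO2log g hg _
    · push_neg at hJ
      obtain ⟨i, hi⟩ := hJ
      refine key0 g hg u' ⟨i, ?_⟩
      rcases lt_or_ge (u' i) (-((r:ℤ) - 1)) with h | h
      · exact Or.inl h
      · exact Or.inr (hi h)
  · intro hmem
    have h1 : foldLin D q L₀ Ot ∈ Submodule.span (ZMod 2)
        (foldLin D q L₀ '' {w : PauliInf D q | ∃ g ∈ G, ∃ u : Site D, w = T D q u g}) := by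
      rw [← Submodule.map_span]
      exact Submodule.mem_map_of_mem hmem
    have h2 : foldLin D q L₀ '' {w : PauliInf D q | ∃ g ∈ G, ∃ u : Site D, w = T D q u g}
        ⊆ {w : PauliTor D q L₀ | ∃ g ∈ G, ∃ u : TorSite D L₀, w = foldedGen D q L₀ g u} := by
      rintro - ⟨w, ⟨g, hg, u, rfl⟩, rfl⟩
      refine ⟨g, hg, π D L₀ u, ?_⟩
      rw [foldLin_apply, fold_T]
    have h3 : O₂ ∈ Submodule.span (ZMod 2)
        {w : PauliTor D q L₀ | ∃ g ∈ G, ∃ u : TorSite D L₀, w = foldedGen D q L₀ g u} := by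
      rw [← hfold]
      exact Submodule.span_mono h2 h1
    have h4 : shiftLin D q L₀ c ''
          {w : PauliTor D q L₀ | ∃ g ∈ G, ∃ u : TorSite D L₀, w = foldedGen D q L₀ g u}
        ⊆ {w : PauliTor D q L₀ | ∃ g ∈ G, ∃ u : TorSite D L₀, w = foldedGen D q L₀ g u} := by
      rintro - ⟨w, ⟨g, hg, u, rfl⟩, rfl⟩
      refine ⟨g, hg, u + c, ?_⟩
      funext t
      show fold D q L₀ g (t - c - u) = fold D q L₀ g (t - (u + c))
      congr 1
      abel
    have h5 : O = shiftLin D q L₀ c O₂ := by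
      funext t
      show O t = O₂ (t - c)
      simp only [hO₂def]
      rw [sub_add_cancel]
    refine hOnontriv ?_
    rw [h5]
    refine Submodule.span_mono h4 ?_
    rw [← Submodule.map_span]
    exact Submodule.mem_map_of_mem h3
end

section
/- Fix an integer L ≥ 2 and consider Cubic Code 1 on the torus (ZMod L)³. Every nontrivial logical operator of Code 1 has support of size at least L. -/
namespace CubicCode1Torus

/-- Sites of the discrete torus `(ZMod L)³`. -/
abbrev Site (L : ℕ) := ZMod L × ZMod L × ZMod L

/-- A CSS Pauli operator (mod phase): a pair `(vX, vZ)` of functions `Site L → F₂ × F₂`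
(two qubits per site). -/
abbrev Pauli (L : ℕ) := (Site L → ZMod 2 × ZMod 2) × (Site L → ZMod 2 × ZMod 2)

/-- The commutation pairing `⟨v,w⟩ = Σ_s (vX(s)·wZ(s) + vZ(s)·wX(s))`. -/
def pairing (L : ℕ) [NeZero L] (v w : Pauli L) : ZMod 2 :=
  ∑ s : Site L,
    ((v.1 s).1 * (w.2 s).1 + (v.1 s).2 * (w.2 s).2 +
     (v.2 s).1 * (w.1 s).1 + (v.2 s).2 * (w.1 s).2)

/-- The Z-corner table of Cubic Code 1. -/
def z : Bool × Bool × Bool → ZMod 2 × ZMod 2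
  | (false, false, false) => (1, 0)
  | (true,  false, false) => (0, 1)
  | (false, true,  false) => (1, 1)
  | (true,  true,  false) => (1, 0)
  | (false, false, true)  => (0, 1)
  | (true,  false, true)  => (0, 0)
  | (false, true,  true)  => (1, 0)
  | (true,  true,  true)  => (0, 1)

/-- Embedding of a corner coordinate `{0,1}` into `ZMod L`. -/
def emb (L : ℕ) (b : Bool) : ZMod L := if b then 1 else 0

/-- The site `p + c` for a corner `c ∈ {0,1}³`. -/
def cellSite (L : ℕ) (p : Site L) (c : Bool × Bool × Bool) : Site L :=
  (p.1 + emb L c.1, p.2.1 + emb L c.2.1, p.2.2 + emb L c.2.2)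

/-- `ζ_p`: the Z-part of the Z-type generator at `p`. -/
def zeta (L : ℕ) [NeZero L] (p : Site L) : Site L → ZMod 2 × ZMod 2 :=
  fun s => ∑ c : Bool × Bool × Bool, if s = cellSite L p c then z c else 0

/-- `ξ_p`: the X-part of the X-type generator at `p`, `ξ_p(p+c) = σ(z((1,1,1)−c))`. -/
def xi (L : ℕ) [NeZero L] (p : Site L) : Site L → ZMod 2 × ZMod 2 :=
  fun s => ∑ c : Bool × Bool × Bool,
    if s = cellSite L p c then
      ((z (!c.1, !c.2.1, !c.2.2)).2, (z (!c.1, !c.2.1, !c.2.2)).1) else 0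

/-- The Z-type generator `g_p = (0, ζ_p)`. -/
def gZ (L : ℕ) [NeZero L] (p : Site L) : Pauli L := (0, zeta L p)

/-- The X-type generator `f_p = (ξ_p, 0)`. -/
def fX (L : ℕ) [NeZero L] (p : Site L) : Pauli L := (xi L p, 0)

/-- The stabilizer subspace: the `F₂`-span of all generators. -/
def stab (L : ℕ) [NeZero L] : Submodule (ZMod 2) (Pauli L) :=
  Submodule.span (ZMod 2) {v : Pauli L | ∃ p : Site L, v = gZ L p ∨ v = fX L p}

/-- The support of a Pauli operator. -/
def support (L : ℕ) (v : Pauli L) : Set (Site L) := {s | v.1 s ≠ 0 ∨ v.2 s ≠ 0}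

end CubicCode1Torus
namespace CC
open CubicCode1Torus MvPolynomial

abbrev F2 := ZMod 2
abbrev Corner := Bool × Bool × Bool
abbrev Exp := Fin 3 →₀ ℕ
abbrev MvP := MvPolynomial (Fin 3) F2

def bn (b : Bool) : ℕ := if b then 1 else 0

def rev (c : Corner) : Corner := (!c.1, !c.2.1, !c.2.2)

@[simp] lemma rev_rev (c : Corner) : rev (rev c) = c := by
  cases c with | mk a bc => cases bc with | mk b g => simp [rev]

def revE : Equiv Corner Corner := ⟨rev, rev, fun c => rev_rev c, fun c => rev_rev c⟩

noncomputable def κ (c : Corner) : Exp :=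
  Finsupp.single 0 (bn c.2.1) + (Finsupp.single 1 (bn c.1) + Finsupp.single 2 (bn c.2.2))

@[simp] lemma κ_apply0 (c : Corner) : κ c 0 = bn c.2.1 := by
  simp [κ, Finsupp.single_apply]
@[simp] lemma κ_apply1 (c : Corner) : κ c 1 = bn c.1 := by
  simp [κ, Finsupp.single_apply]
@[simp] lemma κ_apply2 (c : Corner) : κ c 2 = bn c.2.2 := by
  simp [κ, Finsupp.single_apply]

noncomputable def ι (L : ℕ) [NeZero L] (s : Site L) : Exp :=
  Finsupp.single 0 s.2.1.val + (Finsupp.single 1 s.1.val + Finsupp.single 2 s.2.2.val)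

@[simp] lemma ι_apply0 (L : ℕ) [NeZero L] (s : Site L) : ι L s 0 = s.2.1.val := by
  simp [ι, Finsupp.single_apply]
@[simp] lemma ι_apply1 (L : ℕ) [NeZero L] (s : Site L) : ι L s 1 = s.1.val := by
  simp [ι, Finsupp.single_apply]
@[simp] lemma ι_apply2 (L : ℕ) [NeZero L] (s : Site L) : ι L s 2 = s.2.2.val := by
  simp [ι, Finsupp.single_apply]

def red (L : ℕ) [NeZero L] (e : Exp) : Site L := ((e 1 : ZMod L), (e 0 : ZMod L), (e 2 : ZMod L))

lemma red_add (L : ℕ) [NeZero L] (a b : Exp) : red L (a + b) = red L a + red L b := by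
  simp [red, Prod.ext_iff]

lemma red_ι (L : ℕ) [NeZero L] (s : Site L) : red L (ι L s) = s := by
  simp [red, ZMod.natCast_val, ZMod.cast_id]

lemma ι_inj (L : ℕ) [NeZero L] : Function.Injective (ι L) :=
  Function.LeftInverse.injective (red_ι L)

lemma red_κ (L : ℕ) [NeZero L] (e : Exp) (c : Corner) :
    red L (e + κ c) = cellSite L (red L e) c := by
  cases c with | mk a bc => cases bc with | mk b g =>
  cases a <;> cases b <;> cases g <;>
    simp [red, cellSite, emb, bn, Prod.ext_iff]


lemma fin3 (P : Fin 3 → Prop) (h0 : P 0) (h1 : P 1) (h2 : P 2) : ∀ i, P i := by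
  intro i
  fin_cases i
  exacts [h0, h1, h2]

lemma bn_le_one (b : Bool) : bn b ≤ 1 := by cases b <;> simp [bn]

lemma κ_le_one (c : Corner) : ∀ i, κ c i ≤ 1 :=
  fin3 _ (by simpa using bn_le_one c.2.1) (by simpa using bn_le_one c.1)
    (by simpa using bn_le_one c.2.2)

lemma red_coord_zero (L : ℕ) [NeZero L] (e : Exp) (i : Fin 3)
    (h : ((e i : ℕ) : ZMod L) = 0) :
    (red L e).1 = 0 ∨ (red L e).2.1 = 0 ∨ (red L e).2.2 = 0 := by
  refine fin3 (fun j => ((e j : ℕ) : ZMod L) = 0 →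
    ((red L e).1 = 0 ∨ (red L e).2.1 = 0 ∨ (red L e).2.2 = 0)) ?_ ?_ ?_ i h
  · intro h0; right; left; exact h0
  · intro h0; left; exact h0
  · intro h0; right; right; exact h0

noncomputable def lift (L : ℕ) [NeZero L] (u : Site L → F2) : MvP :=
  ∑ s : Site L, monomial (ι L s) (u s)

noncomputable def P (t : Corner → F2) : MvP := ∑ c : Corner, monomial (κ c) (t c)

/-- vanishing on the three coordinate planes through 0 -/
def Vanishing (L : ℕ) [NeZero L] (u : Site L → F2) : Prop :=
  ∀ s : Site L, (s.1 = 0 ∨ s.2.1 = 0 ∨ s.2.2 = 0) → u s = 0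

lemma coeff_lift (L : ℕ) [NeZero L] (u : Site L → F2) (e : Exp) :
    coeff e (lift L u) = if ∀ i, e i < L then u (red L e) else 0 := by
  classical
  rw [lift, coeff_sum]
  simp_rw [coeff_monomial]
  split_ifs with h
  · have he : e = ι L (red L e) := by
      ext i
      refine fin3 (fun j => e j = ι L (red L e) j) ?_ ?_ ?_ i
      · simp [red, ZMod.val_cast_of_lt (h 0)]
      · simp [red, ZMod.val_cast_of_lt (h 1)]
      · simp [red, ZMod.val_cast_of_lt (h 2)]
    have hcond : ∀ s : Site L, (ι L s = e) = (s = red L e) := by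
      intro s
      apply propext
      constructor
      · intro hc
        rw [← red_ι L s, hc]
      · intro hc
        rw [hc, ← he]
    simp_rw [hcond]
    rw [Finset.sum_ite_eq' Finset.univ (red L e) u]
    simp
  · push_neg at h
    obtain ⟨i, hi⟩ := h
    apply Finset.sum_eq_zero
    intro s _
    rw [if_neg]
    intro hc
    have hlt : ι L s i < L :=
      fin3 (fun j => ι L s j < L) (by simpa using ZMod.val_lt _)
        (by simpa using ZMod.val_lt _) (by simpa using ZMod.val_lt _) i
    rw [hc] at hlt
    omega

lemma coeff_lift_of_le (L : ℕ) [NeZero L] {u : Site L → F2} (hu : Vanishing L u) {e : Exp}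
    (he : ∀ i, e i ≤ L) : coeff e (lift L u) = u (red L e) := by
  rw [coeff_lift]
  split_ifs with h
  · rfl
  · push_neg at h
    obtain ⟨i, hi⟩ := h
    have hei : e i = L := le_antisymm (he i) hi
    symm
    apply hu
    apply red_coord_zero L e i
    rw [hei, ZMod.natCast_self]

lemma key_identity (L : ℕ) [NeZero L] (t1 t2 : Corner → F2) (u1 u2 : Site L → F2)
    (hu1 : Vanishing L u1) (hu2 : Vanishing L u2)
    (hcon : ∀ p : Site L,
      ∑ c : Corner, (u1 (cellSite L p c) * t1 c + u2 (cellSite L p c) * t2 c) = 0) :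
    lift L u1 * P (t1 ∘ rev) + lift L u2 * P (t2 ∘ rev) = 0 := by
  classical
  apply MvPolynomial.ext
  intro d
  rw [coeff_add, coeff_zero]
  have expand : ∀ (u : Site L → F2) (t' : Corner → F2),
      coeff d (lift L u * P t') =
      ∑ c : Corner, (if κ c ≤ d then coeff (d - κ c) (lift L u) * t' c else 0) := by
    intro u t'
    rw [P, Finset.mul_sum, coeff_sum]
    simp_rw [coeff_mul_monomial']
  rw [expand u1 (t1 ∘ rev), expand u2 (t2 ∘ rev)]
  by_cases hA : ∃ i, d i = 0
  · obtain ⟨i, hi⟩ := hA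
    have hterm : ∀ (u : Site L → F2), Vanishing L u → ∀ (t' : Corner → F2) (c : Corner),
        (if κ c ≤ d then coeff (d - κ c) (lift L u) * t' c else 0) = 0 := by
      intro u hu t' c
      split_ifs with h
      · rw [coeff_lift]
        split_ifs with h2
        · have hz : (d - κ c) i = 0 := by
            rw [Finsupp.tsub_apply]
            omega
          rw [hu _ (red_coord_zero L _ i (by rw [hz]; simp)), zero_mul]
        · rw [zero_mul]
      · rfl
    rw [Finset.sum_eq_zero (fun c _ => hterm u1 hu1 _ c),
        Finset.sum_eq_zero (fun c _ => hterm u2 hu2 _ c), add_zero]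
  · by_cases hB : ∃ i, L < d i
    · obtain ⟨i, hi⟩ := hB
      have hterm : ∀ (u : Site L → F2) (t' : Corner → F2) (c : Corner),
          (if κ c ≤ d then coeff (d - κ c) (lift L u) * t' c else 0) = 0 := by
        intro u t' c
        split_ifs with h
        · rw [coeff_lift, if_neg, zero_mul]
          intro hall
          have h1 := hall i
          rw [Finsupp.tsub_apply] at h1
          have h2 := κ_le_one c i
          omega
        · rfl
      rw [Finset.sum_eq_zero (fun c _ => hterm u1 _ c),
          Finset.sum_eq_zero (fun c _ => hterm u2 _ c), add_zero]
    · push_neg at hA hB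
      set p : Site L := ((d 1 : ZMod L) - 1, (d 0 : ZMod L) - 1, (d 2 : ZMod L) - 1) with hp
      have hκd : ∀ c : Corner, κ c ≤ d := by
        intro c
        rw [Finsupp.le_def]
        intro i
        have h1 : 1 ≤ d i := Nat.one_le_iff_ne_zero.2 (hA i)
        have h2 := κ_le_one c i
        omega
      have hcoef : ∀ (u : Site L → F2), Vanishing L u → ∀ c : Corner,
          coeff (d - κ c) (lift L u) = u (cellSite L p (rev c)) := by
        intro u hu c
        rw [coeff_lift_of_le L hu (fun i => le_trans (Nat.sub_le _ _) (hB i))]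
        congr 1
        have hsub : ∀ i, (((d - κ c) i : ℕ) : ZMod L) = (d i : ZMod L) - ((κ c i : ℕ) : ZMod L) := by
          intro i
          rw [Finsupp.tsub_apply, Nat.cast_sub (hκd c i)]
        obtain ⟨a, b, g⟩ := c
        refine Prod.ext ?_ (Prod.ext ?_ ?_)
        · show (((d - κ (a, b, g)) 1 : ℕ) : ZMod L) = p.1 + emb L (!a)
          rw [hsub 1, hp, κ_apply1]
          cases a <;> simp [emb, bn] <;> ring
        · show (((d - κ (a, b, g)) 0 : ℕ) : ZMod L) = p.2.1 + emb L (!b)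
          rw [hsub 0, hp, κ_apply0]
          cases b <;> simp [emb, bn] <;> ring
        · show (((d - κ (a, b, g)) 2 : ℕ) : ZMod L) = p.2.2 + emb L (!g)
          rw [hsub 2, hp, κ_apply2]
          cases g <;> simp [emb, bn] <;> ring
      have hsum : ∀ (u : Site L → F2), Vanishing L u → ∀ (t' : Corner → F2),
          ∑ c : Corner, (if κ c ≤ d then coeff (d - κ c) (lift L u) * t' c else 0) =
          ∑ c : Corner, u (cellSite L p (rev c)) * t' c := by
        intro u hu t'
        apply Finset.sum_congr rfl
        intro c _
        rw [if_pos (hκd c), hcoef u hu c]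
      rw [hsum u1 hu1 _, hsum u2 hu2 _, ← Finset.sum_add_distrib]
      rw [Fintype.sum_equiv revE
        (fun c => u1 (cellSite L p (rev c)) * (t1 ∘ rev) c + u2 (cellSite L p (rev c)) * (t2 ∘ rev) c)
        (fun c => u1 (cellSite L p c) * t1 c + u2 (cellSite L p c) * t2 c)
        (fun c => by simp [revE, Function.comp])]
      exact hcon p

/-- corner-sum function with table τ, the generic shape of ζ/ξ components -/
def cornerFun (L : ℕ) [NeZero L] (τ : Corner → F2) (p s : Site L) : F2 :=
  ∑ c : Corner, if s = cellSite L p c then τ c else 0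

noncomputable def Φ (L : ℕ) [NeZero L] (Q : MvP) (s : Site L) : F2 :=
  ∑ d ∈ Q.support, if red L d = s then coeff d Q else 0

lemma Φ_superset (L : ℕ) [NeZero L] (Q : MvP) (s : Site L) {T : Finset Exp}
    (hT : Q.support ⊆ T) :
    Φ L Q s = ∑ d ∈ T, if red L d = s then coeff d Q else 0 := by
  apply Finset.sum_subset hT
  intro x _ hx
  rw [MvPolynomial.notMem_support_iff.1 hx]
  simp

lemma Φ_add (L : ℕ) [NeZero L] (Q R : MvP) (s : Site L) :
    Φ L (Q + R) s = Φ L Q s + Φ L R s := by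
  classical
  rw [Φ_superset L (Q + R) s (MvPolynomial.support_add (p := Q) (q := R)),
      Φ_superset L Q s (Finset.subset_union_left (s₂ := R.support)),
      Φ_superset L R s (Finset.subset_union_right (s₁ := Q.support)),
      ← Finset.sum_add_distrib]
  apply Finset.sum_congr rfl
  intro d _
  rw [coeff_add]
  split_ifs <;> simp

lemma Φ_zero (L : ℕ) [NeZero L] (s : Site L) : Φ L 0 s = 0 := by
  simp [Φ]

noncomputable def ΦHom (L : ℕ) [NeZero L] (s : Site L) : MvP →+ F2 where
  toFun Q := Φ L Q s
  map_zero' := Φ_zero L s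
  map_add' Q R := Φ_add L Q R s

lemma Φ_sum (L : ℕ) [NeZero L] {α : Type} (F : Finset α) (f : α → MvP) (s : Site L) :
    Φ L (∑ x ∈ F, f x) s = ∑ x ∈ F, Φ L (f x) s :=
  map_sum (ΦHom L s) f F

lemma Φ_monomial (L : ℕ) [NeZero L] (e : Exp) (t : F2) (s : Site L) :
    Φ L (monomial e t) s = if red L e = s then t else 0 := by
  classical
  rw [Φ_superset L _ s MvPolynomial.support_monomial_subset,
      Finset.sum_singleton, coeff_monomial, if_pos rfl]

lemma Φ_lift (L : ℕ) [NeZero L] (u : Site L → F2) (s : Site L) :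
    Φ L (lift L u) s = u s := by
  have : Φ L (lift L u) s = ∑ s' : Site L, Φ L (monomial (ι L s') (u s')) s := by
    rw [lift]
    exact map_sum (ΦHom L s) _ _
  rw [this]
  simp_rw [Φ_monomial, red_ι]
  rw [Finset.sum_ite_eq' Finset.univ s u]
  simp

lemma Φ_mul_P (L : ℕ) [NeZero L] (T : MvP) (τ : Corner → F2) (s : Site L) :
    Φ L (T * P τ) s = ∑ e ∈ T.support, coeff e T * cornerFun L τ (red L e) s := by
  classical
  have hTP : T * P τ = ∑ e ∈ T.support, ∑ c : Corner, monomial (e + κ c) (coeff e T * τ c) := by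
    conv_lhs => rw [T.as_sum]
    rw [Finset.sum_mul]
    apply Finset.sum_congr rfl
    intro e _
    rw [P, Finset.mul_sum]
    apply Finset.sum_congr rfl
    intro c _
    rw [monomial_mul]
  rw [hTP, Φ_sum]
  apply Finset.sum_congr rfl
  intro e _
  rw [Φ_sum]
  have : ∀ c : Corner, Φ L (monomial (e + κ c) (coeff e T * τ c)) s =
      coeff e T * (if s = cellSite L (red L e) c then τ c else 0) := by
    intro c
    rw [Φ_monomial, red_κ]
    rcases eq_or_ne (cellSite L (red L e) c) s with h | h
    · rw [if_pos h, if_pos h.symm]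
    · rw [if_neg h, if_neg (Ne.symm h), mul_zero]
  simp_rw [this]
  rw [cornerFun, Finset.mul_sum]

lemma charTwoEq {a b : MvP} (h : a + b = 0) : a = b := by
  exact (neg_eq_of_add_eq_zero_left h).symm.trans (CharTwo.neg_eq b)

lemma key (L : ℕ) [NeZero L] (τ1 τ2 : Corner → F2)
    (hrel : IsRelPrime (P τ2) (P τ1)) (hne : P τ2 ≠ 0)
    (u1 u2 : Site L → F2) (hu1 : Vanishing L u1) (hu2 : Vanishing L u2)
    (hcon : ∀ p : Site L,
      ∑ c : Corner, (u1 (cellSite L p c) * τ1 (rev c) + u2 (cellSite L p c) * τ2 (rev c)) = 0) :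
    ∃ T : MvP,
      (∀ s, u1 s = ∑ e ∈ T.support, coeff e T * cornerFun L τ2 (red L e) s) ∧
      (∀ s, u2 s = ∑ e ∈ T.support, coeff e T * cornerFun L τ1 (red L e) s) := by
  have hP1 : (τ1 ∘ rev) ∘ rev = τ1 := by funext c; simp [Function.comp]
  have hP2 : (τ2 ∘ rev) ∘ rev = τ2 := by funext c; simp [Function.comp]
  have hid := key_identity L (τ1 ∘ rev) (τ2 ∘ rev) u1 u2 hu1 hu2 hcon
  rw [hP1, hP2] at hid
  have heq : lift L u1 * P τ1 = lift L u2 * P τ2 := charTwoEq hid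
  have hdvd : P τ2 ∣ lift L u1 := by
    apply hrel.dvd_of_dvd_mul_right (y := lift L u1) (z := P τ1)
    exact ⟨lift L u2, by rw [heq]; ring⟩
  obtain ⟨T, hT⟩ := hdvd
  have hT2 : lift L u2 = T * P τ1 := by
    apply mul_right_cancel₀ hne
    rw [← heq, hT]
    ring
  refine ⟨T, fun s => ?_, fun s => ?_⟩
  · rw [← Φ_mul_P, ← Φ_lift L u1 s, hT, mul_comm]
  · rw [← Φ_mul_P, ← Φ_lift L u2 s, hT2]

def z1 (c : Corner) : F2 := (z c).1
def z2 (c : Corner) : F2 := (z c).2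

abbrev S2 := MvPolynomial (Fin 2) F2

lemma monomial_κ (c : Corner) (r : F2) :
    monomial (κ c) r = X 0 ^ bn c.2.1 * (X 1 ^ bn c.1 * (X 2 ^ bn c.2.2 * C r)) := by
  have h : κ c = Finsupp.single 0 (bn c.2.1) +
      (Finsupp.single 1 (bn c.1) + (Finsupp.single 2 (bn c.2.2) + 0)) := by
    rw [add_zero]
    rfl
  rw [h, monomial_single_add, monomial_single_add, monomial_single_add]
  simp [monomial_zero']

lemma Aeq : P z1 = 1 + X 0 + X 0 * X 1 + X 0 * X 2 := by
  rw [P]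
  rw [Fintype.sum_prod_type]
  simp only [Fintype.sum_bool, Fintype.sum_prod_type, monomial_κ, z1, z, bn, Bool.false_eq_true]
  simp only [if_true, if_false, pow_one, pow_zero, one_mul, mul_one, map_one, map_zero, mul_zero]
  ring

lemma Beq : P z2 = X 1 + X 0 + X 2 + X 0 * X 1 * X 2 := by
  rw [P]
  rw [Fintype.sum_prod_type]
  simp only [Fintype.sum_bool, Fintype.sum_prod_type, monomial_κ, z2, z, bn, Bool.false_eq_true]
  simp only [if_true, if_false, pow_one, pow_zero, one_mul, mul_one, map_one, map_zero, mul_zero]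
  ring

lemma Areq : P (z1 ∘ rev) = X 0 * X 1 * X 2 + X 1 * X 2 + X 2 + X 1 := by
  rw [P]
  rw [Fintype.sum_prod_type]
  simp only [Fintype.sum_bool, Fintype.sum_prod_type, monomial_κ, Function.comp, rev, z1, z, bn,
    Bool.not_true, Bool.not_false, Bool.false_eq_true]
  simp only [if_true, if_false, pow_one, pow_zero, one_mul, mul_one, map_one, map_zero, mul_zero]
  ring

lemma Breq : P (z2 ∘ rev) = 1 + X 0 * X 1 + X 0 * X 2 + X 1 * X 2 := by
  rw [P]
  rw [Fintype.sum_prod_type]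
  simp only [Fintype.sum_bool, Fintype.sum_prod_type, monomial_κ, Function.comp, rev, z2, z, bn,
    Bool.not_true, Bool.not_false, Bool.false_eq_true]
  simp only [if_true, if_false, pow_one, pow_zero, one_mul, mul_one, map_one, map_zero, mul_zero]
  ring

lemma Pz1_ne : P z1 ≠ 0 := by
  rw [Aeq]
  intro h
  have := congrArg (MvPolynomial.eval (fun _ : Fin 3 => (0 : F2))) h
  simp at this

lemma PBr_ne : P (z2 ∘ rev) ≠ 0 := by
  rw [Breq]
  intro h
  have := congrArg (MvPolynomial.eval (fun _ : Fin 3 => (0 : F2))) h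
  simp at this

lemma phiA : finSuccEquiv F2 2 (P z1) =
    Polynomial.C 1 + Polynomial.X * Polynomial.C (1 + X 0 + X 1) := by
  rw [Aeq, show (X 1 : MvP) = X (Fin.succ 0) from rfl, show (X 2 : MvP) = X (Fin.succ 1) from rfl]
  simp only [map_add, map_mul, map_one, finSuccEquiv_X_zero, finSuccEquiv_X_succ]
  ring

lemma phiB : finSuccEquiv F2 2 (P z2) =
    Polynomial.C (X 0 + X 1) + Polynomial.X * Polynomial.C (1 + X 0 * X 1) := by
  rw [Beq, show (X 1 : MvP) = X (Fin.succ 0) from rfl, show (X 2 : MvP) = X (Fin.succ 1) from rfl]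
  simp only [map_add, map_mul, map_one, finSuccEquiv_X_zero, finSuccEquiv_X_succ]
  ring

lemma phiAr : finSuccEquiv F2 2 (P (z1 ∘ rev)) =
    Polynomial.C (X 0 + X 1 + X 0 * X 1) + Polynomial.X * Polynomial.C (X 0 * X 1) := by
  rw [Areq, show (X 1 : MvP) = X (Fin.succ 0) from rfl, show (X 2 : MvP) = X (Fin.succ 1) from rfl]
  simp only [map_add, map_mul, map_one, finSuccEquiv_X_zero, finSuccEquiv_X_succ]
  ring

lemma phiBr : finSuccEquiv F2 2 (P (z2 ∘ rev)) =
    Polynomial.C (1 + X 0 * X 1) + Polynomial.X * Polynomial.C (X 0 + X 1) := by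
  rw [Breq, show (X 1 : MvP) = X (Fin.succ 0) from rfl, show (X 2 : MvP) = X (Fin.succ 1) from rfl]
  simp only [map_add, map_mul, map_one, finSuccEquiv_X_zero, finSuccEquiv_X_succ]
  ring

lemma RP (Ap Bp u v : Polynomial S2) (r : S2) (hr : r ≠ 0)
    (hid : u * Ap + v * Bp = Polynomial.C r)
    (hcoef : ∀ d0 : S2, (∀ i, d0 ∣ Ap.coeff i) → (∀ i, d0 ∣ Bp.coeff i) → IsUnit d0) :
    IsRelPrime Ap Bp := by
  intro d hdA hdB
  have hdvd : d ∣ Polynomial.C r := by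
    rw [← hid]; exact dvd_add (hdA.mul_left u) (hdB.mul_left v)
  have hCr : (Polynomial.C r : Polynomial S2) ≠ 0 := by simpa using hr
  have hdeg : d.degree ≤ 0 :=
    le_trans (Polynomial.degree_le_of_dvd hdvd hCr) Polynomial.degree_C_le
  have hd : d = Polynomial.C (d.coeff 0) := Polynomial.eq_C_of_degree_le_zero hdeg
  rw [hd] at hdA hdB ⊢
  exact Polynomial.isUnit_C.2 (hcoef _
    (fun i => (Polynomial.C_dvd_iff_dvd_coeff _ _).1 hdA i)
    (fun i => (Polynomial.C_dvd_iff_dvd_coeff _ _).1 hdB i))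

lemma relPrime_of_map {R S : Type*} [CommRing R] [CommRing S] (e : R ≃+* S) {a b : R}
    (h : IsRelPrime (e a) (e b)) : IsRelPrime a b := by
  intro d hda hdb
  have hu := h (map_dvd e hda) (map_dvd e hdb)
  have h2 : IsUnit (e.symm (e d)) := hu.map e.symm
  rwa [RingEquiv.symm_apply_apply] at h2

lemma relprime_AB : IsRelPrime (P z1) (P z2) := by
  apply relPrime_of_map (finSuccEquiv F2 2).toRingEquiv
  show IsRelPrime (finSuccEquiv F2 2 (P z1)) (finSuccEquiv F2 2 (P z2))
  rw [phiA, phiB]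
  apply RP _ _ (Polynomial.C (1 + X 0 * X 1)) (Polynomial.C (1 + X 0 + X 1))
    (1 + X 0 * X 1 + (1 + X 0 + X 1) * (X 0 + X 1))
  · intro h
    have := congrArg (MvPolynomial.eval (fun _ : Fin 2 => (0 : F2))) h
    simp at this
  · have h2 : ∀ w : Polynomial S2, w + w = 0 := CharTwo.add_self_eq_zero
    simp only [map_add, map_mul, map_one]
    linear_combination (h2 (Polynomial.X * ((1 + Polynomial.C (X 0) + Polynomial.C (X 1)) *
      (1 + Polynomial.C (X 0) * Polynomial.C (X 1)))))
  · intro d0 hA _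
    have h0 := hA 0
    simp only [Polynomial.coeff_add, Polynomial.coeff_C, Polynomial.mul_coeff_zero,
      Polynomial.coeff_X_zero, if_pos rfl, zero_mul, add_zero] at h0
    exact isUnit_of_dvd_one h0

lemma relprime_BrAr : IsRelPrime (P (z2 ∘ rev)) (P (z1 ∘ rev)) := by
  apply relPrime_of_map (finSuccEquiv F2 2).toRingEquiv
  show IsRelPrime (finSuccEquiv F2 2 (P (z2 ∘ rev))) (finSuccEquiv F2 2 (P (z1 ∘ rev)))
  rw [phiBr, phiAr]
  apply RP _ _ (Polynomial.C (X 0 * X 1)) (Polynomial.C (X 0 + X 1))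
    (X 0 * X 1 * (1 + X 0 * X 1) + (X 0 + X 1) * (X 0 + X 1 + X 0 * X 1))
  · intro h
    have := congrArg (MvPolynomial.eval (fun i : Fin 2 => if i = 0 then (1 : F2) else 0)) h
    simp at this
  · have h2 : ∀ w : Polynomial S2, w + w = 0 := CharTwo.add_self_eq_zero
    simp only [map_add, map_mul, map_one]
    linear_combination (h2 (Polynomial.X * (Polynomial.C (X 0) * Polynomial.C (X 1) *
      (Polynomial.C (X 0) + Polynomial.C (X 1)))))
  · intro d0 hA hB
    have h0 := hA 0
    have h1 := hB 1
    simp only [Polynomial.coeff_add, Polynomial.coeff_C, Polynomial.mul_coeff_zero,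
      Polynomial.coeff_X_zero, zero_mul, add_zero, Polynomial.coeff_X_one, one_mul,
      Polynomial.coeff_X_mul, if_neg (one_ne_zero), zero_add] at h0 h1
    have hsum : d0 ∣ (1 + X 0 * X 1) + X 0 * X 1 := dvd_add h0 h1
    rw [add_assoc, CharTwo.add_self_eq_zero, add_zero] at hsum
    exact isUnit_of_dvd_one hsum

lemma cornerFun_zeta_fst (L : ℕ) [NeZero L] (p s : Site L) :
    (zeta L p s).1 = cornerFun L z1 p s := by
  simp only [zeta, cornerFun, Prod.fst_sum, apply_ite Prod.fst, Prod.fst_zero, z1]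

lemma cornerFun_zeta_snd (L : ℕ) [NeZero L] (p s : Site L) :
    (zeta L p s).2 = cornerFun L z2 p s := by
  simp only [zeta, cornerFun, Prod.snd_sum, apply_ite Prod.snd, Prod.snd_zero, z2]

lemma cornerFun_xi_fst (L : ℕ) [NeZero L] (p s : Site L) :
    (xi L p s).1 = cornerFun L (z2 ∘ rev) p s := by
  simp only [xi, cornerFun, Prod.fst_sum, apply_ite Prod.fst, Prod.fst_zero, z2,
    Function.comp_apply, rev]

lemma cornerFun_xi_snd (L : ℕ) [NeZero L] (p s : Site L) :
    (xi L p s).2 = cornerFun L (z1 ∘ rev) p s := by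
  simp only [xi, cornerFun, Prod.snd_sum, apply_ite Prod.snd, Prod.snd_zero, z1,
    Function.comp_apply, rev]

lemma cellSite_add (L : ℕ) [NeZero L] (p o : Site L) (c : Corner) :
    cellSite L (p + o) c = cellSite L p c + o := by
  refine Prod.ext ?_ (Prod.ext ?_ ?_) <;> simp [cellSite] <;> ring

lemma sum_mul_cornerFun (L : ℕ) [NeZero L] (w : Site L → F2) (τ : Corner → F2) (p : Site L) :
    ∑ s : Site L, w s * cornerFun L τ p s = ∑ c : Corner, w (cellSite L p c) * τ c := by
  simp_rw [cornerFun, Finset.mul_sum, mul_ite, mul_zero]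
  rw [Finset.sum_comm]
  apply Finset.sum_congr rfl
  intro c _
  rw [Finset.sum_ite_eq' Finset.univ (cellSite L p c) (fun s => w s * τ c)]
  simp

lemma pairing_corner_gZ (L : ℕ) [NeZero L] (v : Pauli L) (p : Site L) :
    pairing L v (gZ L p) =
      ∑ c : Corner, ((v.1 (cellSite L p c)).1 * z1 c + (v.1 (cellSite L p c)).2 * z2 c) := by
  have step1 : pairing L v (gZ L p)
      = ∑ s : Site L, ((v.1 s).1 * cornerFun L z1 p s + (v.1 s).2 * cornerFun L z2 p s) := by
    rw [pairing]
    apply Finset.sum_congr rfl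
    intro s _
    rw [← cornerFun_zeta_fst, ← cornerFun_zeta_snd]
    show _ + _ + (v.2 s).1 * ((0 : Site L → ZMod 2 × ZMod 2) s).1
        + (v.2 s).2 * ((0 : Site L → ZMod 2 × ZMod 2) s).2 = _
    simp [gZ]
  rw [step1, Finset.sum_add_distrib, sum_mul_cornerFun, sum_mul_cornerFun,
    ← Finset.sum_add_distrib]

lemma pairing_corner_fX (L : ℕ) [NeZero L] (v : Pauli L) (p : Site L) :
    pairing L v (fX L p) =
      ∑ c : Corner, ((v.2 (cellSite L p c)).1 * (z2 ∘ rev) c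
        + (v.2 (cellSite L p c)).2 * (z1 ∘ rev) c) := by
  have step1 : pairing L v (fX L p)
      = ∑ s : Site L, ((v.2 s).1 * cornerFun L (z2 ∘ rev) p s
          + (v.2 s).2 * cornerFun L (z1 ∘ rev) p s) := by
    rw [pairing]
    apply Finset.sum_congr rfl
    intro s _
    rw [← cornerFun_xi_fst, ← cornerFun_xi_snd]
    show (v.1 s).1 * ((0 : Site L → ZMod 2 × ZMod 2) s).1
        + (v.1 s).2 * ((0 : Site L → ZMod 2 × ZMod 2) s).2 + _ + _ = _
    simp [fX]
  rw [step1, Finset.sum_add_distrib, sum_mul_cornerFun, sum_mul_cornerFun,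
    ← Finset.sum_add_distrib]

lemma exists_missing (L : ℕ) [NeZero L] (S : Set (Site L)) (h : S.ncard < L)
    (f : Site L → ZMod L) : ∃ a, ∀ s ∈ S, f s ≠ a := by
  have himg : (f '' S).ncard < L := lt_of_le_of_lt (Set.ncard_image_le S.toFinite) h
  have hne : f '' S ≠ Set.univ := by
    intro h'
    rw [h', Set.ncard_univ, Nat.card_zmod] at himg
    exact lt_irrefl _ himg
  obtain ⟨a, ha⟩ := (Set.ne_univ_iff_exists_notMem _).1 hne
  exact ⟨a, fun s hs hfa => ha ⟨s, hs, hfa⟩⟩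

lemma cornerFun_shift (L : ℕ) [NeZero L] (τ : Corner → F2) (q o s : Site L) :
    cornerFun L τ (q + o) s = cornerFun L τ q (s - o) := by
  rw [cornerFun, cornerFun]
  apply Finset.sum_congr rfl
  intro c _
  rw [cellSite_add]
  apply if_congr _ rfl rfl
  constructor
  · intro h; rw [h]; abel
  · intro h; rw [← h]; abel

lemma memZ (L : ℕ) [NeZero L] (v2 : Site L → ZMod 2 × ZMod 2) (T : MvP) (o : Site L)
    (h1 : ∀ s, (v2 (s + o)).1 = ∑ e ∈ T.support, coeff e T * cornerFun L z1 (red L e) s)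
    (h2 : ∀ s, (v2 (s + o)).2 = ∑ e ∈ T.support, coeff e T * cornerFun L z2 (red L e) s) :
    ((0, v2) : Pauli L) ∈ stab L := by
  have hfun : ∀ s : Site L, v2 s = ∑ e ∈ T.support, coeff e T • zeta L (red L e + o) s := by
    intro s
    have e1 := h1 (s - o)
    have e2 := h2 (s - o)
    rw [sub_add_cancel] at e1 e2
    refine Prod.ext ?_ ?_
    · rw [e1, Prod.fst_sum]
      apply Finset.sum_congr rfl
      intro e _
      rw [Prod.smul_fst, smul_eq_mul, cornerFun_zeta_fst, cornerFun_shift]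
    · rw [e2, Prod.snd_sum]
      apply Finset.sum_congr rfl
      intro e _
      rw [Prod.smul_snd, smul_eq_mul, cornerFun_zeta_snd, cornerFun_shift]
  have heq : ((0, v2) : Pauli L) = ∑ e ∈ T.support, coeff e T • gZ L (red L e + o) := by
    refine Prod.ext ?_ ?_
    · rw [Prod.fst_sum]
      symm
      apply Finset.sum_eq_zero
      intro e _
      rw [Prod.smul_fst]
      show coeff e T • (0 : Site L → ZMod 2 × ZMod 2) = 0
      rw [smul_zero]
    · rw [Prod.snd_sum]
      funext s
      rw [Finset.sum_apply]
      rw [show ((0, v2) : Pauli L).2 = v2 from rfl, hfun s]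
      apply Finset.sum_congr rfl
      intro e _
      rw [Prod.smul_snd]
      rfl
  rw [heq]
  exact Submodule.sum_mem _ (fun e _ => Submodule.smul_mem _ _
    (Submodule.subset_span ⟨red L e + o, Or.inl rfl⟩))

lemma memX (L : ℕ) [NeZero L] (v1 : Site L → ZMod 2 × ZMod 2) (T : MvP) (o : Site L)
    (h1 : ∀ s, (v1 (s + o)).1 = ∑ e ∈ T.support, coeff e T * cornerFun L (z2 ∘ rev) (red L e) s)
    (h2 : ∀ s, (v1 (s + o)).2 = ∑ e ∈ T.support, coeff e T * cornerFun L (z1 ∘ rev) (red L e) s) :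
    ((v1, 0) : Pauli L) ∈ stab L := by
  have hfun : ∀ s : Site L, v1 s = ∑ e ∈ T.support, coeff e T • xi L (red L e + o) s := by
    intro s
    have e1 := h1 (s - o)
    have e2 := h2 (s - o)
    rw [sub_add_cancel] at e1 e2
    refine Prod.ext ?_ ?_
    · rw [e1, Prod.fst_sum]
      apply Finset.sum_congr rfl
      intro e _
      rw [Prod.smul_fst, smul_eq_mul, cornerFun_xi_fst, cornerFun_shift]
    · rw [e2, Prod.snd_sum]
      apply Finset.sum_congr rfl
      intro e _
      rw [Prod.smul_snd, smul_eq_mul, cornerFun_xi_snd, cornerFun_shift]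
  have heq : ((v1, 0) : Pauli L) = ∑ e ∈ T.support, coeff e T • fX L (red L e + o) := by
    refine Prod.ext ?_ ?_
    · rw [Prod.fst_sum]
      funext s
      rw [Finset.sum_apply]
      rw [show ((v1, 0) : Pauli L).1 = v1 from rfl, hfun s]
      apply Finset.sum_congr rfl
      intro e _
      rw [Prod.smul_fst]
      rfl
    · rw [Prod.snd_sum]
      symm
      apply Finset.sum_eq_zero
      intro e _
      rw [Prod.smul_snd]
      show coeff e T • (0 : Site L → ZMod 2 × ZMod 2) = 0
      rw [smul_zero]
  rw [heq]
  exact Submodule.sum_mem _ (fun e _ => Submodule.smul_mem _ _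
    (Submodule.subset_span ⟨red L e + o, Or.inr rfl⟩))

end CC



open CubicCode1Torus

/-- Every nontrivial logical operator of Cubic Code 1 on the torus `(ZMod L)³`
has support of size at least `L`. -/
theorem cubicCode1_distance_ge_L (L : ℕ) [NeZero L] (hL : 2 ≤ L)
    (v : Pauli L)
    (hlog : ∀ p : Site L, pairing L v (gZ L p) = 0 ∧ pairing L v (fX L p) = 0)
    (hnontriv : v ∉ stab L) :
    L ≤ (support L v).ncard := by
  by_contra hlt
  push_neg at hlt
  obtain ⟨a1, ha1⟩ := CC.exists_missing L (support L v) hlt (fun s => s.1)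
  obtain ⟨a2, ha2⟩ := CC.exists_missing L (support L v) hlt (fun s => s.2.1)
  obtain ⟨a3, ha3⟩ := CC.exists_missing L (support L v) hlt (fun s => s.2.2)
  set o : Site L := (a1, a2, a3) with ho
  have hout : ∀ s : Site L, (s.1 = 0 ∨ s.2.1 = 0 ∨ s.2.2 = 0) →
      v.1 (s + o) = 0 ∧ v.2 (s + o) = 0 := by
    intro s hs
    have hnot : s + o ∉ support L v := by
      intro hmem
      rcases hs with h | h | h
      · refine ha1 _ hmem ?_
        show (s + o).1 = a1
        rw [Prod.fst_add, h, zero_add, ho]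
      · refine ha2 _ hmem ?_
        show (s + o).2.1 = a2
        rw [Prod.snd_add, Prod.fst_add, h, zero_add, ho]
      · refine ha3 _ hmem ?_
        show (s + o).2.2 = a3
        rw [Prod.snd_add, Prod.snd_add, h, zero_add, ho]
    simp only [support, Set.mem_setOf_eq] at hnot
    push_neg at hnot
    exact hnot
  have hu1Z : CC.Vanishing L (fun s => (v.2 (s + o)).1) := fun s hs => by
    show (v.2 (s + o)).1 = 0
    rw [(hout s hs).2]; rfl
  have hu2Z : CC.Vanishing L (fun s => (v.2 (s + o)).2) := fun s hs => by
    show (v.2 (s + o)).2 = 0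
    rw [(hout s hs).2]; rfl
  have hu1X : CC.Vanishing L (fun s => (v.1 (s + o)).1) := fun s hs => by
    show (v.1 (s + o)).1 = 0
    rw [(hout s hs).1]; rfl
  have hu2X : CC.Vanishing L (fun s => (v.1 (s + o)).2) := fun s hs => by
    show (v.1 (s + o)).2 = 0
    rw [(hout s hs).1]; rfl
  have hconZ : ∀ p : Site L, ∑ c : CC.Corner,
      ((fun s => (v.2 (s + o)).1) (cellSite L p c) * CC.z2 (CC.rev c)
        + (fun s => (v.2 (s + o)).2) (cellSite L p c) * CC.z1 (CC.rev c)) = 0 := by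
    intro p
    have h := (hlog (p + o)).2
    rw [CC.pairing_corner_fX] at h
    rw [← h]
    apply Finset.sum_congr rfl
    intro c _
    rw [CC.cellSite_add]
    rfl
  have hconX : ∀ p : Site L, ∑ c : CC.Corner,
      ((fun s => (v.1 (s + o)).1) (cellSite L p c) * (CC.z1 ∘ CC.rev) (CC.rev c)
        + (fun s => (v.1 (s + o)).2) (cellSite L p c) * (CC.z2 ∘ CC.rev) (CC.rev c)) = 0 := by
    intro p
    have h := (hlog (p + o)).1
    rw [CC.pairing_corner_gZ] at h
    rw [← h]
    apply Finset.sum_congr rfl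
    intro c _
    rw [CC.cellSite_add]
    simp [CC.rev_rev]
  obtain ⟨TZ, hTZ1, hTZ2⟩ := CC.key L CC.z2 CC.z1 CC.relprime_AB CC.Pz1_ne _ _ hu1Z hu2Z hconZ
  obtain ⟨TX, hTX1, hTX2⟩ := CC.key L (CC.z1 ∘ CC.rev) (CC.z2 ∘ CC.rev)
    CC.relprime_BrAr CC.PBr_ne _ _ hu1X hu2X hconX
  have hmemZ := CC.memZ L v.2 TZ o hTZ1 hTZ2
  have hmemX := CC.memX L v.1 TX o hTX1 hTX2
  have hvsum : v = ((v.1, 0) : Pauli L) + ((0, v.2) : Pauli L) := by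
    refine Prod.ext ?_ ?_ <;> simp
  exact hnontriv (hvsum ▸ Submodule.add_mem _ hmemX hmemZ)
end

section
/- Let f₁, f₂ : ℕ → α be eventually periodic functions with periods t₁ and t₂ respectively, where t₁ ≠ t₂, and suppose f₁(n + t₁) = f₁(n) for all n > n₁ and f₂(n + t₂) = f₂(n) for all n > n₂. Then there exists n' ≤ max(n₁, n₂) + lcm(t₁, t₂) such that f₁(n') ≠ f₂(n'). -/
/-- Iterating a quasi-period. -/
lemma aux_quasi_mul {α : Type*} (f : ℕ → α) (t m : ℕ)
    (h : ∀ n > m, f (n + t) = f n) : ∀ k, ∀ n > m, f (n + k * t) = f n := by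
  intro k
  induction k with
  | zero => simp
  | succ k ih =>
      intro n hn
      have : n + (k + 1) * t = n + k * t + t := by ring
      rw [this, h (n + k * t) (by omega), ih n hn]

/-- Two eventually periodic functions with different periods disagree at some point
`n' ≤ max(n₁,n₂) + lcm(t₁,t₂)`. -/
theorem eventually_periodic_ne_of_period_ne {α : Type*} (f₁ f₂ : ℕ → α)
    (t₁ t₂ n₁ n₂ : ℕ) (ht₁ : 1 ≤ t₁) (ht₂ : 1 ≤ t₂)
    (h₁ : ∀ n > n₁, f₁ (n + t₁) = f₁ n) (h₂ : ∀ n > n₂, f₂ (n + t₂) = f₂ n)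
    (hp₁ : t₁ = sInf {u : ℕ | 1 ≤ u ∧ ∃ m : ℕ, ∀ n > m, f₁ (n + u) = f₁ n})
    (hp₂ : t₂ = sInf {u : ℕ | 1 ≤ u ∧ ∃ m : ℕ, ∀ n > m, f₂ (n + u) = f₂ n})
    (hne : t₁ ≠ t₂) :
    ∃ n' ≤ max n₁ n₂ + Nat.lcm t₁ t₂, f₁ n' ≠ f₂ n' := by
  by_contra hcon
  push_neg at hcon
  set L := Nat.lcm t₁ t₂ with hL
  have hLpos : 1 ≤ L := Nat.lcm_pos ht₁ ht₂
  obtain ⟨k₁, hk₁⟩ := Nat.dvd_lcm_left t₁ t₂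
  obtain ⟨k₂, hk₂⟩ := Nat.dvd_lcm_right t₁ t₂
  have hL₁ : ∀ n > n₁, f₁ (n + L) = f₁ n := by
    intro n hn
    have := aux_quasi_mul f₁ t₁ n₁ h₁ k₁ n hn
    rwa [show k₁ * t₁ = L by rw [hL, hk₁, Nat.mul_comm]] at this
  have hL₂ : ∀ n > n₂, f₂ (n + L) = f₂ n := by
    intro n hn
    have := aux_quasi_mul f₂ t₂ n₂ h₂ k₂ n hn
    rwa [show k₂ * t₂ = L by rw [hL, hk₂, Nat.mul_comm]] at this
  -- f₁ = f₂ everywhere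
  have heq : ∀ n, f₁ n = f₂ n := by
    intro n
    induction n using Nat.strong_induction_on with
    | _ n ih =>
      by_cases hn : n ≤ max n₁ n₂ + L
      · exact hcon n hn
      · have hgt : n - L > max n₁ n₂ := by omega
        have hsub : n - L + L = n := by omega
        have e1 : f₁ (n - L + L) = f₁ (n - L) := hL₁ (n - L) (by omega)
        have e2 : f₂ (n - L + L) = f₂ (n - L) := hL₂ (n - L) (by omega)
        rw [hsub] at e1 e2
        rw [e1, e2, ih (n - L) (by omega)]
  have mem₂ : t₂ ∈ {u : ℕ | 1 ≤ u ∧ ∃ m : ℕ, ∀ n > m, f₁ (n + u) = f₁ n} := by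
    refine ⟨ht₂, n₂, fun n hn => ?_⟩
    rw [heq, heq]; exact h₂ n hn
  have mem₁ : t₁ ∈ {u : ℕ | 1 ≤ u ∧ ∃ m : ℕ, ∀ n > m, f₂ (n + u) = f₂ n} := by
    refine ⟨ht₁, n₁, fun n hn => ?_⟩
    rw [← heq, ← heq]; exact h₁ n hn
  have le1 : t₁ ≤ t₂ := hp₁ ▸ Nat.sInf_le mem₂
  have le2 : t₂ ≤ t₁ := hp₂ ▸ Nat.sInf_le mem₁
  omega
end

section
/- Let V be a vector space over F₂ = ZMod 2, let M : V → V be a linear map with M ∘ M = M, and let b : V × V → V be an arbitrary function. Suppose sequences a, p : ℕ → V satisfy a(j+1) = M(a(j)) + b(p(j+1), p(j)) for all j ≥ 1. If p is eventually periodic with quasi-period t ≥ 1 and offset n₀ (i.e., p(n+t) = p(n) for all n > n₀), then a is eventually periodic with quasi-period 2t and offset n₀ + t (i.e., a(n+2t) = a(n) for all n > n₀ + t). -/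
/-- Doubling of quasi-period: over `F₂`, if `M` is idempotent,
`a(j+1) = M(a(j)) + b(p(j+1), p(j))` for `j ≥ 1`, and the previous row `p` is eventually
periodic with quasi-period `t` and offset `n₀`, then `a` is eventually periodic with
quasi-period `2t` and offset `n₀ + t`. -/
theorem quasiPeriod_doubling_idempotent {V : Type*}
    [AddCommGroup V] [Module (ZMod 2) V]
    (M : V →ₗ[ZMod 2] V) (hM : M ∘ₗ M = M) (b : V × V → V) (a p : ℕ → V)
    (ha : ∀ j : ℕ, 1 ≤ j → a (j + 1) = M (a j) + b (p (j + 1), p j))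
    (t n₀ : ℕ) (ht : 1 ≤ t) (hp : ∀ n > n₀, p (n + t) = p n) :
    ∀ n > n₀ + t, a (n + 2 * t) = a n := by
  set d : ℕ → V := fun n => a (n + t) - a n with hd
  have step : ∀ n > n₀, d (n + 1) = M (d n) := by
    intro n hn
    have hn1 : 1 ≤ n := le_trans (Nat.one_le_iff_ne_zero.mpr (by omega)) le_rfl
    have hnt1 : 1 ≤ n + t := by omega
    have e1 : a (n + t + 1) = M (a (n + t)) + b (p (n + t + 1), p (n + t)) := ha (n + t) hnt1
    have e2 : a (n + 1) = M (a n) + b (p (n + 1), p n) := ha n hn1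
    have hp1 : p (n + 1 + t) = p (n + 1) := hp (n + 1) (by omega)
    have hp0 : p (n + t) = p n := hp n hn
    simp only [hd]
    have : n + 1 + t = n + t + 1 := by ring
    rw [this, e1, e2, ← this, hp1, hp0]
    rw [map_sub]
    abel
  have idem : ∀ n > n₀ + 1, d (n + 1) = d n := by
    intro n hn
    have h1 : d n = M (d (n - 1)) := by
      have := step (n - 1) (by omega)
      rwa [Nat.sub_add_cancel (by omega : 1 ≤ n)] at this
    rw [step n (by omega), h1, ← LinearMap.comp_apply, hM]
  have const : ∀ m k, n₀ + 2 ≤ m → d (m + k) = d m := by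
    intro m k hm
    induction k with
    | zero => rfl
    | succ k ih => rw [← Nat.add_assoc, idem (m + k) (by omega), ih]
  intro n hn
  have hdn : d (n + t) = d n := by
    have := const n t (by omega)
    exact this
  have key : a (n + 2 * t) - a n = d (n + t) + d n := by
    simp only [hd]
    have : n + t + t = n + 2 * t := by ring
    rw [this]
    abel
  have hzero : d (n + t) + d n = 0 := by
    rw [hdn, ← two_smul (ZMod 2) (d n)]
    have h2 : (2 : ZMod 2) = 0 := rfl
    rw [h2, zero_smul]
  have := key.trans hzero
  have := sub_eq_zero.mp this
  exact this
end

section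
/- Let V be a vector space over F₂ = ZMod 2, let N : V → V be a linear map with N ∘ N = id, and let b : V × V → V be an arbitrary function. Suppose sequences a, p : ℕ → V satisfy a(j+1) = N(a(j)) + b(p(j+1), p(j)) for all j ≥ 1. If p is eventually periodic with quasi-period t ≥ 1 and offset n₀ (i.e., p(n+t) = p(n) for all n > n₀), then a is eventually periodic with quasi-period 4t and offset n₀ (i.e., a(n+4t) = a(n) for all n > n₀). -/
/-- Quadrupling of quasi-period: over `F₂`, if `N` is an involution,
`a(j+1) = N(a(j)) + b(p(j+1), p(j))` for `j ≥ 1`, and the previous row `p` is eventually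
periodic with quasi-period `t` and offset `n₀`, then `a` is eventually periodic with
quasi-period `4t` and offset `n₀`. -/
theorem quasiPeriod_quadrupling_involution {V : Type*}
    [AddCommGroup V] [Module (ZMod 2) V]
    (N : V →ₗ[ZMod 2] V) (hN : N ∘ₗ N = LinearMap.id) (b : V × V → V) (a p : ℕ → V)
    (ha : ∀ j : ℕ, 1 ≤ j → a (j + 1) = N (a j) + b (p (j + 1), p j))
    (t n₀ : ℕ) (ht : 1 ≤ t) (hp : ∀ n > n₀, p (n + t) = p n) :
    ∀ n > n₀, a (n + 4 * t) = a n := by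
  have hNN : ∀ v, N (N v) = v := fun v => LinearMap.ext_iff.mp hN v
  have h2 : ∀ v : V, v + v = 0 := by
    intro v
    have h : (2 : ZMod 2) • v = 0 := by rw [show (2 : ZMod 2) = 0 by decide, zero_smul]
    rw [← h, two_smul]
  -- periodicity of the inhomogeneous term
  have hc : ∀ n > n₀, b (p (n + t + 1), p (n + t)) = b (p (n + 1), p n) := by
    intro n hn
    have e1 : p (n + t + 1) = p (n + 1) := by
      have := hp (n + 1) (by omega)
      simpa [show n + 1 + t = n + t + 1 by ring] using this
    rw [e1, hp n hn]
  set e : ℕ → V := fun n => a (n + 2 * t) - a n with he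
  have hstep : ∀ n > n₀, e (n + 1) = N (e n) := by
    intro n hn
    have h1 := ha (n + 2 * t) (by omega)
    have h2' := ha n (by omega)
    have hcc : b (p (n + 2 * t + 1), p (n + 2 * t)) = b (p (n + 1), p n) := by
      have e2 := hc (n + t) (by omega)
      have e1 := hc n hn
      calc b (p (n + 2 * t + 1), p (n + 2 * t))
          = b (p (n + t + t + 1), p (n + t + t)) := by ring_nf
        _ = b (p (n + t + 1), p (n + t)) := e2
        _ = b (p (n + 1), p n) := e1
    show a (n + 1 + 2 * t) - a (n + 1) = N (a (n + 2 * t) - a n)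
    rw [show n + 1 + 2 * t = n + 2 * t + 1 by ring, h1, h2', hcc, map_sub]
    abel
  have hstep2 : ∀ n > n₀, e (n + 2) = e n := by
    intro n hn
    have := hstep (n + 1) (by omega)
    rw [show n + 2 = n + 1 + 1 by ring, this, hstep n hn, hNN]
  have hper : ∀ k : ℕ, ∀ n > n₀, e (n + 2 * k) = e n := by
    intro k
    induction k with
    | zero => simp
    | succ k ih =>
      intro n hn
      have := hstep2 (n + 2 * k) (by omega)
      rw [show n + 2 * (k + 1) = n + 2 * k + 2 by ring, this, ih n hn]
  intro n hn
  have key : e (n + 2 * t) = e n := hper t n hn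
  have : a (n + 4 * t) - a (n + 2 * t) = a (n + 2 * t) - a n := by
    have : a (n + 2 * t + 2 * t) - a (n + 2 * t) = a (n + 2 * t) - a n := key
    simpa [show n + 2 * t + 2 * t = n + 4 * t by ring] using this
  have hadd : a (n + 4 * t) + a n = a (n + 2 * t) + a (n + 2 * t) :=
    sub_eq_sub_iff_add_eq_add.mp this
  rw [h2 (a (n + 2 * t))] at hadd
  have := neg_eq_of_add_eq_zero_left (h2 (a n))
  rw [neg_eq_of_add_eq_zero_left hadd] at this
  exact this
end

section
/- Fix an integer L ≥ 2 and consider Cubic Code 1 on the torus (ZMod L)³. The F₂-dimension of the stabilizer subspace S (the span of the 2L³ generators {g_p, f_p : p ∈ Λ}) is at least 2L³ − 4L; equivalently, the number of encoded qubits k = 2L³ − dim S satisfies k ≤ 4L. -/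
open CubicCode1Torus
open CubicCode1Torus AddMonoidAlgebra

set_option linter.unusedSectionVars false

namespace CC1
abbrev B3 : Type := Bool × Bool × Bool

variable (L : ℕ) [NeZero L]

abbrev R := AddMonoidAlgebra (ZMod 2) (Site L)

noncomputable def eR : R L ≃ₗ[(ZMod 2)] (Site L → (ZMod 2)) := (AddMonoidAlgebra.coeffLinearEquiv (ZMod 2)).trans (Finsupp.linearEquivFunOnFinite (ZMod 2) (ZMod 2) (Site L))

instance : Module.Finite (ZMod 2) (R L) := Module.Finite.equiv (eR L).symm

def csite (c : B3) : Site L := (emb L c.1, emb L c.2.1, emb L c.2.2)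

lemma cellSite_eq (p : Site L) (c : B3) : cellSite L p c = p + csite L c := rfl

noncomputable def FF (t : B3 → (ZMod 2)) : R L := ∑ c : B3, single (csite L c) (t c)

def famW (w : B3 → (ZMod 2) × (ZMod 2)) (p : Site L) : Site L → (ZMod 2) × (ZMod 2) :=
  fun s => ∑ c : B3, if s = cellSite L p c then w c else 0

lemma zeta_eq : zeta L = famW L z := rfl

lemma xi_eq : xi L = famW L (fun c => ((z (!c.1, !c.2.1, !c.2.2)).2, (z (!c.1, !c.2.1, !c.2.2)).1)) := rfl

lemma mulFF_apply (a : R L) (t : B3 → (ZMod 2)) (s : Site L) :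
    (a * FF L t).coeff s = ∑ c : B3, a.coeff (s - csite L c) * t c := by
  rw [FF, Finset.mul_sum]
  rw [AddMonoidAlgebra.coeff_sum, Finsupp.finset_sum_apply]
  exact Finset.sum_congr rfl fun c _ => by rw [AddMonoidAlgebra.coeff_mul_single_apply, sub_eq_add_neg]

noncomputable def TT (w : B3 → (ZMod 2) × (ZMod 2)) : (Site L → (ZMod 2)) →ₗ[(ZMod 2)] (Site L → (ZMod 2) × (ZMod 2)) :=
  Fintype.linearCombination (ZMod 2) (famW L w)

lemma TT_fst (w : B3 → (ZMod 2) × (ZMod 2)) (a : R L) (s : Site L) :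
    (TT L w (⇑a.coeff) s).1 = (a * FF L (fun c => (w c).1)).coeff s := by
  rw [mulFF_apply, TT, Fintype.linearCombination_apply, Finset.sum_apply, Prod.fst_sum]
  have h1 : ∀ p : Site L, ((a.coeff p • famW L w p) s).1
      = ∑ c : B3, if s = cellSite L p c then a.coeff p * (w c).1 else 0 := by
    intro p
    rw [Pi.smul_apply, Prod.smul_fst, famW, Prod.fst_sum, Finset.smul_sum]
    refine Finset.sum_congr rfl fun c _ => ?_
    rw [apply_ite Prod.fst, Prod.fst_zero, smul_ite, smul_eq_mul, smul_zero]
  rw [Finset.sum_congr rfl fun p _ => h1 p, Finset.sum_comm]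
  refine Finset.sum_congr rfl fun c _ => ?_
  have h2 : ∀ p : Site L, (if s = cellSite L p c then a.coeff p * (w c).1 else 0)
      = (if s - csite L c = p then a.coeff p * (w c).1 else 0) := by
    intro p
    refine if_congr ?_ rfl rfl
    rw [cellSite_eq, sub_eq_iff_eq_add]
  rw [Finset.sum_congr rfl fun p _ => h2 p, Finset.sum_ite_eq, if_pos (Finset.mem_univ _)]

lemma TT_snd (w : B3 → (ZMod 2) × (ZMod 2)) (a : R L) (s : Site L) :
    (TT L w (⇑a.coeff) s).2 = (a * FF L (fun c => (w c).2)).coeff s := by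
  rw [mulFF_apply, TT, Fintype.linearCombination_apply, Finset.sum_apply, Prod.snd_sum]
  have h1 : ∀ p : Site L, ((a.coeff p • famW L w p) s).2
      = ∑ c : B3, if s = cellSite L p c then a.coeff p * (w c).2 else 0 := by
    intro p
    rw [Pi.smul_apply, Prod.smul_snd, famW, Prod.snd_sum, Finset.smul_sum]
    refine Finset.sum_congr rfl fun c _ => ?_
    rw [apply_ite Prod.snd, Prod.snd_zero, smul_ite, smul_eq_mul, smul_zero]
  rw [Finset.sum_congr rfl fun p _ => h1 p, Finset.sum_comm]
  refine Finset.sum_congr rfl fun c _ => ?_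
  have h2 : ∀ p : Site L, (if s = cellSite L p c then a.coeff p * (w c).2 else 0)
      = (if s - csite L c = p then a.coeff p * (w c).2 else 0) := by
    intro p
    refine if_congr ?_ rfl rfl
    rw [cellSite_eq, sub_eq_iff_eq_add]
  rw [Finset.sum_congr rfl fun p _ => h2 p, Finset.sum_ite_eq, if_pos (Finset.mem_univ _)]

noncomputable def KK (t t' : B3 → (ZMod 2)) : Submodule (ZMod 2) (R L) :=
  LinearMap.ker (LinearMap.mulRight (ZMod 2) (FF L t)) ⊓ LinearMap.ker (LinearMap.mulRight (ZMod 2) (FF L t'))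

lemma mem_KK (t t' : B3 → (ZMod 2)) (a : R L) :
    a ∈ KK L t t' ↔ a * FF L t = 0 ∧ a * FF L t' = 0 := by
  rw [KK, Submodule.mem_inf, LinearMap.mem_ker, LinearMap.mem_ker,
    LinearMap.mulRight_apply, LinearMap.mulRight_apply]

lemma TT_zero_iff (w : B3 → (ZMod 2) × (ZMod 2)) (a : R L) :
    TT L w (⇑a.coeff) = 0 ↔
      a * FF L (fun c => (w c).1) = 0 ∧ a * FF L (fun c => (w c).2) = 0 := by
  constructor
  · intro h
    refine ⟨AddMonoidAlgebra.ext (Finsupp.ext fun s => ?_), AddMonoidAlgebra.ext (Finsupp.ext fun s => ?_)⟩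
    · have := congrFun h s
      rw [← TT_fst L w a s, this]
      rfl
    · have := congrFun h s
      rw [← TT_snd L w a s, this]
      rfl
  · rintro ⟨h1, h2⟩
    funext s
    refine Prod.ext ?_ ?_
    · rw [TT_fst L w a s, h1]; rfl
    · rw [TT_snd L w a s, h2]; rfl

lemma ker_TT (w : B3 → (ZMod 2) × (ZMod 2)) :
    LinearMap.ker (TT L w)
      = (KK L (fun c => (w c).1) (fun c => (w c).2)).map (eR L).toLinearMap := by
  ext u
  rw [LinearMap.mem_ker, Submodule.mem_map_equiv, mem_KK]
  have hu : ⇑((eR L).symm u).coeff = u := rfl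
  rw [← TT_zero_iff, hu]

lemma card_site : Fintype.card (Site L) = L ^ 3 := by
  simp [Fintype.card_prod, ZMod.card]; ring

lemma rank_span_fam (w : B3 → (ZMod 2) × (ZMod 2)) :
    Module.finrank (ZMod 2) (Submodule.span (ZMod 2) (Set.range (famW L w)))
      + Module.finrank (ZMod 2) (KK L (fun c => (w c).1) (fun c => (w c).2)) = L ^ 3 := by
  have h := LinearMap.finrank_range_add_finrank_ker (TT L w)
  rw [ker_TT, LinearEquiv.finrank_map_eq, Module.finrank_pi, card_site] at h
  rw [← h]
  congr 1
  rw [TT, Fintype.range_linearCombination]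

def t1 : B3 → (ZMod 2) := fun c => (z c).1
def t2 : B3 → (ZMod 2) := fun c => (z c).2
def u1 : B3 → (ZMod 2) := fun c => (z (!c.1, !c.2.1, !c.2.2)).2
def u2 : B3 → (ZMod 2) := fun c => (z (!c.1, !c.2.1, !c.2.2)).1

noncomputable def XR : R L := single ((1 : ZMod L), (0 : ZMod L), (0 : ZMod L)) 1
noncomputable def YR : R L := single ((0 : ZMod L), (1 : ZMod L), (0 : ZMod L)) 1
noncomputable def ZR : R L := single ((0 : ZMod L), (0 : ZMod L), (1 : ZMod L)) 1

lemma one_R : (1 : R L) = single ((0 : ZMod L), (0 : ZMod L), (0 : ZMod L)) 1 := rfl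

lemma FF_t1 : FF L t1 = 1 + YR L + XR L * YR L + YR L * ZR L := by
  simp only [FF, t1, Fintype.sum_prod_type, Fintype.sum_bool, z, csite, emb,
    if_true, if_false, Prod.fst_zero, Prod.snd_zero, AddMonoidAlgebra.single_zero, XR, YR, ZR, one_R,
    AddMonoidAlgebra.single_mul_single, Prod.mk_add_mk, add_zero, zero_add, mul_one, Bool.false_eq_true, ↓reduceIte]
  abel

lemma FF_t2 : FF L t2 = XR L + YR L + ZR L + XR L * YR L * ZR L := by
  simp only [FF, t2, Fintype.sum_prod_type, Fintype.sum_bool, z, csite, emb,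
    if_true, if_false, Prod.fst_zero, Prod.snd_zero, AddMonoidAlgebra.single_zero, XR, YR, ZR, one_R,
    AddMonoidAlgebra.single_mul_single, Prod.mk_add_mk, add_zero, zero_add, mul_one]
  abel

lemma XR_pow : XR L ^ L = 1 := by
  rw [XR, AddMonoidAlgebra.single_pow, one_pow, AddMonoidAlgebra.one_def]
  congr 1
  show L • ((1 : ZMod L), (0 : ZMod L), (0 : ZMod L)) = (0 : Site L)
  rw [Prod.smul_mk, Prod.smul_mk, smul_zero, nsmul_eq_mul, mul_one, ZMod.natCast_self,
    Prod.mk_zero_zero, Prod.mk_zero_zero]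

lemma ZR_pow : ZR L ^ L = 1 := by
  rw [ZR, AddMonoidAlgebra.single_pow, one_pow, AddMonoidAlgebra.one_def]
  congr 1
  show L • ((0 : ZMod L), (0 : ZMod L), (1 : ZMod L)) = (0 : Site L)
  rw [Prod.smul_mk, Prod.smul_mk, smul_zero, nsmul_eq_mul, mul_one, ZMod.natCast_self,
    Prod.mk_zero_zero, Prod.mk_zero_zero]

noncomputable def Iz : Ideal (R L) := Ideal.span {FF L t1, FF L t2}

abbrev Q := R L ⧸ Iz L

noncomputable def mkQ : R L →ₐ[(ZMod 2)] Q L := Ideal.Quotient.mkₐ (ZMod 2) (Iz L)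

lemma mkQ_surj : Function.Surjective (mkQ L) := Ideal.Quotient.mkₐ_surjective (ZMod 2) (Iz L)

instance : Module.Finite (ZMod 2) (Q L) :=
  Module.Finite.of_surjective (mkQ L).toLinearMap (mkQ_surj L)

noncomputable def Xq : Q L := mkQ L (XR L)
noncomputable def Yq : Q L := mkQ L (YR L)
noncomputable def Zq : Q L := mkQ L (ZR L)

lemma hch : (2 : Q L) = 0 := by
  have h2 : (2 : (ZMod 2)) = 0 := by decide
  calc (2 : Q L) = algebraMap (ZMod 2) (Q L) 2 := (map_ofNat _ 2).symm
  _ = 0 := by rw [h2, map_zero]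

lemma h1q : 1 + Yq L + Xq L * Yq L + Yq L * Zq L = 0 := by
  have h : mkQ L (FF L t1) = 0 := by
    rw [mkQ, Ideal.Quotient.mkₐ_eq_mk, Ideal.Quotient.eq_zero_iff_mem]
    exact Ideal.subset_span (by simp)
  rw [FF_t1] at h
  simpa [Xq, Yq, Zq] using h

lemma h2q : Xq L + Yq L + Zq L + Xq L * Yq L * Zq L = 0 := by
  have h : mkQ L (FF L t2) = 0 := by
    rw [mkQ, Ideal.Quotient.mkₐ_eq_mk, Ideal.Quotient.eq_zero_iff_mem]
    exact Ideal.subset_span (by simp)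
  rw [FF_t2] at h
  simpa [Xq, Yq, Zq] using h

lemma hXLq : Xq L ^ L = 1 := by rw [Xq, ← map_pow, XR_pow, map_one]

lemma hZLq : Zq L ^ L = 1 := by rw [Zq, ← map_pow, ZR_pow, map_one]

lemma hq : Zq L ^ 2 = 1 + Xq L + Zq L + Xq L * Zq L + Xq L ^ 2 := by
  linear_combination (1 + Xq L * Zq L) * h1q L + (1 + Xq L + Zq L) * h2q L
    + (-(1 + Zq L + Yq L + Yq L * Zq L + Xq L + 2 * Xq L * Zq L + Xq L * Yq L
        + Xq L * Yq L * Zq L + Xq L * Yq L * Zq L ^ 2 + Xq L ^ 2 + Xq L ^ 2 * Yq L * Zq L)) * hch L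

lemma hYq : Yq L * (1 + Xq L + Zq L) = 1 := by
  linear_combination h1q L - hch L

noncomputable def vb : Fin L × Bool → Q L :=
  fun ib => Xq L ^ (ib.1 : ℕ) * Zq L ^ (cond ib.2 1 0)

noncomputable def SS : Submodule (ZMod 2) (Q L) := Submodule.span (ZMod 2) (Set.range (vb L))

lemma Xpow_red (n : ℕ) : Xq L ^ n = Xq L ^ (n % L) := by
  conv_lhs => rw [← Nat.mod_add_div n L]
  rw [pow_add, pow_mul, hXLq, one_pow, mul_one]

lemma mem1 (n : ℕ) (b : Bool) : Xq L ^ n * Zq L ^ (cond b 1 0) ∈ SS L := by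
  rw [Xpow_red]
  have hL0 : 0 < L := Nat.pos_of_ne_zero (NeZero.ne L)
  exact Submodule.subset_span ⟨(⟨n % L, Nat.mod_lt n hL0⟩, b), rfl⟩

lemma memS : ∀ (c n : ℕ), Xq L ^ n * Zq L ^ c ∈ SS L := by
  intro c
  induction c using Nat.strong_induction_on with
  | _ c IH =>
    match c, IH with
    | 0, _ => exact fun n => mem1 L n false
    | 1, _ => exact fun n => mem1 L n true
    | (k+2), IH =>
      intro n
      have e1 : Xq L ^ n * Zq L ^ (k+2)
          = Xq L ^ n * Zq L ^ k + Xq L ^ (n+1) * Zq L ^ k + Xq L ^ n * Zq L ^ (k+1)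
            + Xq L ^ (n+1) * Zq L ^ (k+1) + Xq L ^ (n+2) * Zq L ^ k := by
        calc Xq L ^ n * Zq L ^ (k+2) = Xq L ^ n * Zq L ^ k * Zq L ^ 2 := by ring
        _ = Xq L ^ n * Zq L ^ k * (1 + Xq L + Zq L + Xq L * Zq L + Xq L ^ 2) := by rw [hq]
        _ = _ := by ring
      rw [e1]
      exact add_mem (add_mem (add_mem (add_mem (IH k (by omega) n) (IH k (by omega) (n+1)))
        (IH (k+1) (by omega) n)) (IH (k+1) (by omega) (n+1))) (IH k (by omega) (n+2))

lemma one_mem_SS : (1 : Q L) ∈ SS L := by simpa using memS L 0 0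

lemma mul_mem_SS : ∀ a ∈ SS L, ∀ b ∈ SS L, a * b ∈ SS L := by
  intro a ha
  induction ha using Submodule.span_induction with
  | mem x hx =>
    obtain ⟨i, rfl⟩ := hx
    intro b hb
    induction hb using Submodule.span_induction with
    | mem y hy =>
      obtain ⟨j, rfl⟩ := hy
      have h : vb L i * vb L j
          = Xq L ^ ((i.1 : ℕ) + (j.1 : ℕ)) * Zq L ^ ((cond i.2 1 0) + (cond j.2 1 0)) := by
        rw [vb, vb]; ring
      rw [h]; exact memS L _ _
    | zero => rw [mul_zero]; exact zero_mem _
    | add y z hy hz hy' hz' => rw [mul_add]; exact add_mem hy' hz'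
    | smul k y hy hy' => rw [mul_smul_comm]; exact Submodule.smul_mem _ _ hy'
  | zero => intro b hb; rw [zero_mul]; exact zero_mem _
  | add x y hx hy hx' hy' => intro b hb; rw [add_mul]; exact add_mem (hx' b hb) (hy' b hb)
  | smul k x hx hx' => intro b hb; rw [smul_mul_assoc]; exact Submodule.smul_mem _ _ (hx' b hb)

lemma pow_mem_SS (x : Q L) (hx : x ∈ SS L) : ∀ n : ℕ, x ^ n ∈ SS L
  | 0 => by rw [pow_zero]; exact one_mem_SS L
  | n+1 => by rw [pow_succ]; exact mul_mem_SS L _ (pow_mem_SS x hx n) _ hx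

lemma Yq_mem : Yq L ∈ SS L := by
  have hx : Xq L ∈ SS L := by simpa using memS L 0 1
  have hz : Zq L ∈ SS L := by simpa using memS L 1 0
  have ht : (1 + Xq L + Zq L) ∈ SS L := add_mem (add_mem (one_mem_SS L) hx) hz
  have hyt : Yq L * (1 + Xq L + Zq L) = 1 := hYq L
  let μ : SS L →ₗ[(ZMod 2)] SS L :=
    { toFun := fun a => ⟨(1 + Xq L + Zq L) * a, mul_mem_SS L _ ht a a.2⟩
      map_add' := fun a b => by ext; simp [mul_add]
      map_smul' := fun k a => by ext; simp [mul_smul_comm] }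
  have hinj : Function.Injective μ := by
    intro a b hab
    have h1 : (1 + Xq L + Zq L) * (a : Q L) = (1 + Xq L + Zq L) * (b : Q L) :=
      congrArg Subtype.val hab
    have h2 : Yq L * ((1 + Xq L + Zq L) * (a : Q L))
        = Yq L * ((1 + Xq L + Zq L) * (b : Q L)) := by rw [h1]
    rw [← mul_assoc, ← mul_assoc, hyt, one_mul, one_mul] at h2
    exact Subtype.ext h2
  have hsurj := (LinearMap.injective_iff_surjective).mp hinj
  obtain ⟨a, ha⟩ := hsurj ⟨1, one_mem_SS L⟩
  have h1 : (1 + Xq L + Zq L) * (a : Q L) = 1 := congrArg Subtype.val ha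
  have h2 : Yq L = (a : Q L) := by
    calc Yq L = Yq L * ((1 + Xq L + Zq L) * (a : Q L)) := by rw [h1, mul_one]
    _ = (Yq L * (1 + Xq L + Zq L)) * (a : Q L) := by ring
    _ = (a : Q L) := by rw [hyt, one_mul]
  rw [h2]; exact a.2

lemma single_mem (s : Site L) : mkQ L (single s (1 : (ZMod 2))) ∈ SS L := by
  have hcomp : ∀ a : ZMod L, a.val • (1 : ZMod L) = a := fun a => by
    rw [nsmul_eq_mul, mul_one, ZMod.natCast_rightInverse a]
  have hs : single s (1 : (ZMod 2)) = XR L ^ s.1.val * YR L ^ s.2.1.val * ZR L ^ s.2.2.val := by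
    rw [XR, YR, ZR, AddMonoidAlgebra.single_pow, AddMonoidAlgebra.single_pow,
      AddMonoidAlgebra.single_pow, AddMonoidAlgebra.single_mul_single,
      AddMonoidAlgebra.single_mul_single]
    simp only [one_pow, one_mul, mul_one]
    congr 1
    simp only [Prod.smul_mk, Prod.mk_add_mk, smul_zero, hcomp, add_zero, zero_add, Prod.mk.eta]
  rw [hs, map_mul, map_mul, map_pow, map_pow, map_pow]
  exact mul_mem_SS L _ (mul_mem_SS L _ (pow_mem_SS L _ (show Xq L ∈ SS L by simpa using memS L 0 1) _) _
    (pow_mem_SS L _ (Yq_mem L) _)) _ (pow_mem_SS L _ (show Zq L ∈ SS L by simpa using memS L 1 0) _)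

lemma SS_top : SS L = ⊤ := by
  rw [eq_top_iff]
  rintro q -
  obtain ⟨r, rfl⟩ := mkQ_surj L q
  rw [← AddMonoidAlgebra.sum_coeff_single r, map_finsuppSum]
  refine Submodule.sum_mem _ fun s _ => ?_
  show mkQ L (single s (r.coeff s)) ∈ SS L
  have h1 : single s (r.coeff s) = (r.coeff s) • single s (1 : (ZMod 2)) := by
    rw [AddMonoidAlgebra.smul_single', mul_one]
  rw [h1, map_smul]
  exact Submodule.smul_mem _ _ (single_mem L s)

lemma finrank_Q_le : Module.finrank (ZMod 2) (Q L) ≤ 2 * L := by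
  have h1 : Module.finrank (ZMod 2) (Q L) = Module.finrank (ZMod 2) (SS L) := by
    rw [SS_top]
    exact (finrank_top (ZMod 2) (Q L)).symm
  have h2 := finrank_range_le_card (R := (ZMod 2)) (vb L)
  rw [Set.finrank] at h2
  rw [h1, SS]
  refine le_trans h2 ?_
  simp [Fintype.card_prod, Fintype.card_fin, Fintype.card_bool, Nat.mul_comm]

noncomputable def Phi : R L →ₗ[(ZMod 2)] Module.Dual (ZMod 2) (R L) :=
  LinearMap.mk₂ (ZMod 2) (fun a b => (a * b).coeff (0 : Site L))
    (fun a a' b => by rw [add_mul, AddMonoidAlgebra.coeff_add]; rfl)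
    (fun k a b => by rw [smul_mul_assoc, AddMonoidAlgebra.coeff_smul]; rfl)
    (fun a b b' => by rw [mul_add, AddMonoidAlgebra.coeff_add]; rfl)
    (fun k a b => by rw [mul_smul_comm, AddMonoidAlgebra.coeff_smul]; rfl)

lemma Phi_inj : Function.Injective (Phi L) := by
  rw [← LinearMap.ker_eq_bot, eq_bot_iff]
  intro a ha
  rw [LinearMap.mem_ker] at ha
  rw [Submodule.mem_bot]
  ext s
  have h : (a * single (-s) (1 : (ZMod 2))).coeff (0 : Site L) = 0 := LinearMap.congr_fun ha (single (-s) 1)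
  rw [AddMonoidAlgebra.coeff_mul_single_apply, zero_add, neg_neg, mul_one] at h
  simpa using h

noncomputable def J : Submodule (ZMod 2) (R L) := (Iz L).restrictScalars (ZMod 2)

lemma map_Phi_le : (KK L t1 t2).map (Phi L) ≤ (J L).dualAnnihilator := by
  rintro φ ⟨a, ha, rfl⟩
  rw [Submodule.mem_dualAnnihilator]
  intro f hf
  rw [J, Submodule.restrictScalars_mem, Iz] at hf
  rw [SetLike.mem_coe, mem_KK] at ha
  have hf0 : a * f = 0 := by
    induction hf using Submodule.span_induction with
    | mem x hx =>
      rcases hx with h | h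
      · rw [h]; exact ha.1
      · rw [Set.mem_singleton_iff] at h; rw [h]; exact ha.2
    | zero => rw [mul_zero]
    | add x y _ _ hx hy => rw [mul_add, hx, hy, add_zero]
    | smul r x _ hx => rw [smul_eq_mul, mul_left_comm, hx, mul_zero]
  show (a * f).coeff (0 : Site L) = 0
  rw [hf0]
  rfl

lemma finrank_KK_le : Module.finrank (ZMod 2) (KK L t1 t2) ≤ 2 * L := by
  have e1 : Module.finrank (ZMod 2) (KK L t1 t2)
      = Module.finrank (ZMod 2) ((KK L t1 t2).map (Phi L)) :=
    (Submodule.equivMapOfInjective (Phi L) (Phi_inj L) _).finrank_eq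
  have e2 : Module.finrank (ZMod 2) ((KK L t1 t2).map (Phi L))
      ≤ Module.finrank (ZMod 2) ((J L).dualAnnihilator) :=
    Submodule.finrank_mono (map_Phi_le L)
  have e3 : Module.finrank (ZMod 2) ((J L).dualAnnihilator)
      = Module.finrank (ZMod 2) (Module.Dual (ZMod 2) (R L ⧸ J L)) :=
    (LinearEquiv.finrank_eq (Submodule.dualQuotEquivDualAnnihilator (J L))).symm
  have e4 : Module.finrank (ZMod 2) (Module.Dual (ZMod 2) (R L ⧸ J L))
      = Module.finrank (ZMod 2) (R L ⧸ J L) := Subspace.dual_finrank_eq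
  have e5 : Module.finrank (ZMod 2) (R L ⧸ J L) = Module.finrank (ZMod 2) (Q L) := by
    have hker : J L = LinearMap.ker (mkQ L).toLinearMap := by
      ext x
      rw [LinearMap.mem_ker]
      show x ∈ (Iz L).restrictScalars (ZMod 2) ↔ mkQ L x = 0
      rw [Submodule.restrictScalars_mem, mkQ, Ideal.Quotient.mkₐ_eq_mk,
        Ideal.Quotient.eq_zero_iff_mem]
    exact ((Submodule.quotEquivOfEq _ _ hker).trans
      (LinearMap.quotKerEquivOfSurjective _ (mkQ_surj L))).finrank_eq
  have := finrank_Q_le L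
  omega

noncomputable def N : R L ≃ₐ[(ZMod 2)] R L := AddMonoidAlgebra.domCongr (ZMod 2) (ZMod 2) (AddEquiv.neg (Site L))

lemma N_apply (a : R L) (s : Site L) : (N L a).coeff s = a.coeff (-s) := by
  rw [N, AddMonoidAlgebra.coeff_domCongr]; rfl

lemma N_single (s : Site L) (k : (ZMod 2)) : N L (single s k) = single (-s) k := by
  rw [N, AddMonoidAlgebra.domCongr_single]
  rfl

lemma NN (a : R L) : N L (N L a) = a := AddMonoidAlgebra.ext (Finsupp.ext fun s => by
  rw [N_apply, N_apply, neg_neg])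

def e111 : Site L := ((1 : ZMod L), (1 : ZMod L), (1 : ZMod L))

noncomputable def Uu : R L := single (e111 L) 1

def bE : B3 ≃ B3 where
  toFun c := (!c.1, !c.2.1, !c.2.2)
  invFun c := (!c.1, !c.2.1, !c.2.2)
  left_inv c := by simp
  right_inv c := by simp

lemma site_bang (c : B3) : e111 L - csite L (bE c) = csite L c := by
  rcases c with ⟨b1, b2, b3⟩
  cases b1 <;> cases b2 <;> cases b3 <;>
    simp [e111, csite, bE, emb, Prod.mk_sub_mk, sub_zero, sub_self, -Prod.mk_one_one] <;> rfl

lemma FF_u1 : FF L u1 = Uu L * N L (FF L t2) := by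
  rw [FF, FF, map_sum, Finset.mul_sum]
  refine Fintype.sum_equiv bE _ _ fun c => ?_
  rw [N_single, Uu, AddMonoidAlgebra.single_mul_single, one_mul, ← sub_eq_add_neg, site_bang]
  rfl

lemma FF_u2 : FF L u2 = Uu L * N L (FF L t1) := by
  rw [FF, FF, map_sum, Finset.mul_sum]
  refine Fintype.sum_equiv bE _ _ fun c => ?_
  rw [N_single, Uu, AddMonoidAlgebra.single_mul_single, one_mul, ← sub_eq_add_neg, site_bang]
  rfl

lemma mul_single_one_eq_zero_iff (x : R L) (s0 : Site L) :
    x * single s0 (1 : (ZMod 2)) = 0 ↔ x = 0 := by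
  constructor
  · intro h
    have h2 : x = x * (single s0 (1 : (ZMod 2)) * single (-s0) (1 : (ZMod 2))) := by
      rw [AddMonoidAlgebra.single_mul_single, add_neg_cancel, mul_one,
        ← AddMonoidAlgebra.one_def, mul_one]
    rw [h2, ← mul_assoc, h, zero_mul]
  · rintro rfl; rw [zero_mul]

lemma mul_NFF_iff (a : R L) (t : B3 → (ZMod 2)) :
    a * (Uu L * N L (FF L t)) = 0 ↔ N L a * FF L t = 0 := by
  constructor
  · intro h
    have h2 := congrArg (N L) h
    rw [map_mul, map_mul, NN, map_zero] at h2
    have h3 : (N L a * FF L t) * N L (Uu L) = 0 := by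
      calc (N L a * FF L t) * N L (Uu L)
          = N L a * (N L (Uu L) * FF L t) := by ring
      _ = 0 := h2
    rw [Uu, N_single] at h3
    exact (mul_single_one_eq_zero_iff L _ _).mp h3
  · intro h
    have h3 : N L (a * (Uu L * N L (FF L t))) = 0 := by
      rw [map_mul, map_mul, NN]
      calc N L a * (N L (Uu L) * FF L t) = (N L a * FF L t) * N L (Uu L) := by ring
      _ = 0 := by rw [h, zero_mul]
    have h4 : N L (a * (Uu L * N L (FF L t))) = N L 0 := by rw [h3, map_zero]
    exact (N L).injective h4

lemma mem_KK_xi_iff (a : R L) : a ∈ KK L u1 u2 ↔ N L a ∈ KK L t1 t2 := by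
  rw [mem_KK, mem_KK, FF_u1, FF_u2, mul_NFF_iff, mul_NFF_iff]
  exact and_comm

lemma finrank_KK_xi : Module.finrank (ZMod 2) (KK L u1 u2) = Module.finrank (ZMod 2) (KK L t1 t2) := by
  have hmap : (KK L u1 u2).map ((N L).toLinearEquiv : R L →ₗ[(ZMod 2)] R L) = KK L t1 t2 := by
    ext x
    rw [Submodule.mem_map_equiv]
    have hx : ((N L).toLinearEquiv.symm x : R L) = N L (N L ((N L).toLinearEquiv.symm x)) :=
      (NN L _).symm
    constructor
    · intro h
      have h2 := (mem_KK_xi_iff L _).mp h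
      have h3 : N L ((N L).toLinearEquiv.symm x) = x := by
        exact (N L).apply_symm_apply x
      rw [h3] at h2
      exact h2
    · intro h
      rw [mem_KK_xi_iff]
      have h3 : N L ((N L).toLinearEquiv.symm x) = x := (N L).apply_symm_apply x
      rw [h3]
      exact h
  rw [← hmap, LinearEquiv.finrank_map_eq]

lemma span_zeta_ge :
    L ^ 3 ≤ Module.finrank (ZMod 2) (Submodule.span (ZMod 2) (Set.range (zeta L))) + 2 * L := by
  have h : Module.finrank (ZMod 2) (Submodule.span (ZMod 2) (Set.range (famW L z)))
      + Module.finrank (ZMod 2) (KK L t1 t2) = L ^ 3 := rank_span_fam L z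
  have h2 := finrank_KK_le L
  rw [zeta_eq]
  omega

lemma span_xi_ge :
    L ^ 3 ≤ Module.finrank (ZMod 2) (Submodule.span (ZMod 2) (Set.range (xi L))) + 2 * L := by
  have h : Module.finrank (ZMod 2) (Submodule.span (ZMod 2) (Set.range (famW L
        (fun c => ((z (!c.1, !c.2.1, !c.2.2)).2, (z (!c.1, !c.2.1, !c.2.2)).1)))))
      + Module.finrank (ZMod 2) (KK L u1 u2) = L ^ 3 :=
    rank_span_fam L (fun c => ((z (!c.1, !c.2.1, !c.2.2)).2, (z (!c.1, !c.2.1, !c.2.2)).1))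
  rw [finrank_KK_xi] at h
  have h2 := finrank_KK_le L
  rw [xi_eq]
  omega

def prodSubEquiv {M N : Type*} [AddCommMonoid M] [AddCommMonoid N] [Module (ZMod 2) M]
    [Module (ZMod 2) N] (p : Submodule (ZMod 2) M) (q : Submodule (ZMod 2) N) :
    (p.prod q) ≃ₗ[ZMod 2] p × q where
  toFun x := (⟨x.1.1, (Submodule.mem_prod.mp x.2).1⟩, ⟨x.1.2, (Submodule.mem_prod.mp x.2).2⟩)
  map_add' _ _ := rfl
  map_smul' _ _ := rfl
  invFun y := ⟨(y.1.1, y.2.1), Submodule.mem_prod.mpr ⟨y.1.2, y.2.2⟩⟩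
  left_inv _ := rfl
  right_inv _ := rfl

lemma stab_ge : 2 * L ^ 3 ≤ Module.finrank (ZMod 2) (stab L) + 4 * L := by
  classical
  have hprod : ((Submodule.span (ZMod 2) (Set.range (xi L))).prod
      (Submodule.span (ZMod 2) (Set.range (zeta L))) : Submodule (ZMod 2) (Pauli L))
      ≤ stab L := by
    rw [LinearMap.prod_eq_sup_map, sup_le_iff]
    constructor
    · rw [Submodule.map_span, Submodule.span_le]
      rintro v ⟨w, ⟨p, rfl⟩, rfl⟩
      exact Submodule.subset_span ⟨p, Or.inr rfl⟩
    · rw [Submodule.map_span, Submodule.span_le]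
      rintro v ⟨w, ⟨p, rfl⟩, rfl⟩
      exact Submodule.subset_span ⟨p, Or.inl rfl⟩
  have hfr : Module.finrank (ZMod 2) ((Submodule.span (ZMod 2) (Set.range (xi L))).prod
        (Submodule.span (ZMod 2) (Set.range (zeta L))))
      = Module.finrank (ZMod 2) (Submodule.span (ZMod 2) (Set.range (xi L)))
        + Module.finrank (ZMod 2) (Submodule.span (ZMod 2) (Set.range (zeta L))) := by
    rw [(prodSubEquiv _ _).finrank_eq, Module.finrank_prod]
  have hmono : Module.finrank (ZMod 2) ((Submodule.span (ZMod 2) (Set.range (xi L))).prod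
        (Submodule.span (ZMod 2) (Set.range (zeta L))))
      ≤ Module.finrank (ZMod 2) (stab L) := Submodule.finrank_mono hprod
  have h1 := span_xi_ge L
  have h2 := span_zeta_ge L
  omega

end CC1

/-- The `F₂`-dimension of the stabilizer subspace of Cubic Code 1 on the torus `(ZMod L)³`
is at least `2L³ − 4L`; equivalently, the number of encoded qubits
`k = 2L³ − dim S` satisfies `k ≤ 4L`. -/
theorem cubicCode1_encoded_qubits_le (L : ℕ) [NeZero L] (hL : 2 ≤ L) :
    2 * L ^ 3 - 4 * L ≤ Module.finrank (ZMod 2) (stab L) ∧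
    2 * L ^ 3 - Module.finrank (ZMod 2) (stab L) ≤ 4 * L := by
  have h1 := CC1.stab_ge L
  constructor <;> omega
end

section
/- Let L > 4 be an integer and let C be the L × L matrix over F₂ = ZMod 2 with entries C(i,j) = 1 if i − j ≡ 2 (mod L) or i − j ≡ −2 (mod L), and C(i,j) = 0 otherwise. Then the rank of C equals L − 1 if L is odd, L − 4 if 4 divides L, and L − 2 if L is even but 4 does not divide L; in particular, for even L the rank equals 4⌈L/4⌉ − 4. -/
private lemma char2_helper : ∀ x y : ZMod 2, (x + y = 0 ↔ x = y) := by decide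

private lemma rank_circ_aux (L : ℕ) (hL : 4 < L)
    (C : Matrix (Fin L) (Fin L) (ZMod 2))
    (hC : ∀ i j : Fin L,
      C i j = if ((i : ZMod L) - (j : ZMod L) = 2 ∨ (i : ZMod L) - (j : ZMod L) = -2)
        then 1 else 0) :
    C.rank = L - Nat.gcd L 4 := by
  have hL0 : 0 < L := by omega
  haveI : NeZero L := ⟨by omega⟩
  set d := Nat.gcd L 4 with hd
  have hdL : d ∣ L := Nat.gcd_dvd_left L 4
  have hd4 : d ∣ 4 := Nat.gcd_dvd_right L 4
  have hdpos : 0 < d := Nat.gcd_pos_of_pos_left 4 hL0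
  haveI : NeZero d := ⟨by omega⟩
  -- the inverse of the natural coercion `Fin L → ZMod L`
  let f : ZMod L → Fin L := fun x => ⟨x.val, ZMod.val_lt x⟩
  have hfc : ∀ x : ZMod L, ((f x : Fin L) : ZMod L) = x := fun x =>
    ZMod.natCast_rightInverse x
  have hcf : ∀ i : Fin L, f ((i : ZMod L)) = i := by
    intro i
    apply Fin.ext
    show ((i : ZMod L)).val = i.val
    have h1 : ((i : ZMod L)) = ((i.val : ℕ) : ZMod L) := rfl
    rw [h1, ZMod.val_natCast, Nat.mod_eq_of_lt i.isLt]
  have hfinj : ∀ (j : Fin L) (x : ZMod L), j = f x ↔ (j : ZMod L) = x :=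
    fun j x => ⟨fun h => by rw [h, hfc], fun h => by rw [← h, hcf]⟩
  have h4ne : (4 : ZMod L) ≠ 0 := by
    have : ((4 : ℕ) : ZMod L) ≠ 0 := by
      rw [Ne, ZMod.natCast_eq_zero_iff]
      intro h
      exact absurd (Nat.le_of_dvd (by norm_num) h) (by omega)
    simpa using this
  set a : Fin L → Fin L := fun i => f ((i : ZMod L) - 2) with ha
  set b : Fin L → Fin L := fun i => f ((i : ZMod L) + 2) with hb
  have hab : ∀ i, a i ≠ b i := by
    intro i h
    have h2 : ((i : ZMod L) - 2 : ZMod L) = (i : ZMod L) + 2 := by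
      rw [← hfc ((i : ZMod L) - 2), ← hfc ((i : ZMod L) + 2)]
      exact congrArg (fun t : Fin L => ((t : ℕ) : ZMod L)) h
    apply h4ne
    linear_combination -h2
  have hiff1 : ∀ i j : Fin L, ((i : ZMod L) - (j : ZMod L) = 2) ↔ j = a i := by
    intro i j
    rw [ha, hfinj]
    constructor <;> intro h <;> linear_combination -h
  have hiff2 : ∀ i j : Fin L, ((i : ZMod L) - (j : ZMod L) = -2) ↔ j = b i := by
    intro i j
    rw [hb, hfinj]
    constructor <;> intro h <;> linear_combination -h
  have hCab : ∀ i j, C i j =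
      (if j = a i then (1 : ZMod 2) else 0) + (if j = b i then 1 else 0) := by
    intro i j
    rw [hC i j, if_congr (or_congr (hiff1 i j) (hiff2 i j)) rfl rfl]
    by_cases h1 : j = a i
    · have h2 : j ≠ b i := fun h => hab i (h1.symm.trans h)
      simp [h1, h2, hab i]
    · by_cases h2 : j = b i <;> simp [h1, h2, (hab i).symm]
  have hmul : ∀ (v : Fin L → ZMod 2) (i), C.mulVec v i = v (a i) + v (b i) := by
    intro v i
    show ∑ j, C i j * v j = _
    rw [Finset.sum_congr rfl (fun j _ => by rw [hCab i j])]
    simp [add_mul, ite_mul, Finset.sum_add_distrib, Finset.sum_ite_eq']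
  have hker : ∀ v, v ∈ LinearMap.ker C.mulVecLin ↔
      ∀ y : ZMod L, v (f (y + 4)) = v (f y) := by
    intro v
    rw [LinearMap.mem_ker]
    constructor
    · intro h y
      have h0 := congrFun h (f (y + 2))
      rw [Matrix.mulVecLin_apply, hmul] at h0
      have hA : a (f (y + 2)) = f y := by rw [ha]; simp only [hfc]; ring_nf
      have hB : b (f (y + 2)) = f (y + 4) := by rw [hb]; simp only [hfc]; ring_nf
      rw [hA, hB, Pi.zero_apply, char2_helper] at h0
      exact h0.symm
    · intro h
      funext i
      rw [Matrix.mulVecLin_apply, hmul, Pi.zero_apply, char2_helper]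
      have hA : a i = f ((i : ZMod L) - 2) := rfl
      have hB : b i = f (((i : ZMod L) - 2) + 4) := by rw [hb]; ring_nf
      rw [hA, hB, h]
  -- the candidate kernel space
  let g : Fin L → ZMod d := fun i => ZMod.castHom hdL (ZMod d) (i : ZMod L)
  have hgf : ∀ x : ZMod L, g (f x) = ZMod.castHom hdL (ZMod d) x := fun x => by
    show ZMod.castHom hdL (ZMod d) ((f x : Fin L) : ZMod L) = _
    rw [hfc]
  have hgsurj : Function.Surjective g := by
    intro z
    refine ⟨f ((z.val : ℕ) : ZMod L), ?_⟩
    rw [hgf, map_natCast]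
    exact ZMod.natCast_rightInverse z
  let Φ : (ZMod d → ZMod 2) →ₗ[ZMod 2] (Fin L → ZMod 2) :=
    LinearMap.funLeft (ZMod 2) (ZMod 2) g
  have hΦinj : Function.Injective Φ :=
    LinearMap.funLeft_injective_of_surjective _ _ _ hgsurj
  have hcast4 : (ZMod.castHom hdL (ZMod d)) (4 : ZMod L) = 0 := by
    have h1 : ((4 : ℕ) : ZMod d) = 0 := by
      rw [ZMod.natCast_eq_zero_iff]; exact hd4
    have h2 : ((4 : ZMod L)) = ((4 : ℕ) : ZMod L) := by norm_num
    rw [h2, map_natCast, h1]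
  have hrange : LinearMap.range Φ = LinearMap.ker C.mulVecLin := by
    ext v
    rw [LinearMap.mem_range, hker]
    constructor
    · rintro ⟨u, rfl⟩ y
      show u (g (f (y + 4))) = u (g (f y))
      rw [hgf, hgf, map_add, hcast4, add_zero]
    · intro h
      have hsub : ∀ s : ZMod L, v (f (s - 4)) = v (f s) := by
        intro s
        have h0 := h (s - 4)
        rw [sub_add_cancel] at h0
        exact h0.symm
      have hint : ∀ (k : ℤ) (t : ZMod L), v (f (t + 4 * (k : ZMod L))) = v (f t) := by
        intro k
        induction k using Int.induction_on with
        | zero => intro t; norm_num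
        | succ n ih =>
            intro t
            have he : t + 4 * (((n : ℤ) + 1 : ℤ) : ZMod L) = (t + 4 * ((n : ℤ) : ZMod L)) + 4 := by
              push_cast; ring
            rw [he, h, ih]
        | pred n ih =>
            intro t
            have he : t + 4 * ((-(n : ℤ) - 1 : ℤ) : ZMod L) = (t + 4 * ((-(n : ℤ) : ℤ) : ZMod L)) - 4 := by
              push_cast; ring
            rw [he, hsub, ih]
      have hdinv : ∀ t : ZMod L, v (f (t + (d : ZMod L))) = v (f t) := by
        have hbez := Nat.gcd_eq_gcd_ab L 4
        have hdz : ((d : ℕ) : ZMod L) = 4 * ((Nat.gcdB L 4 : ℤ) : ZMod L) := by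
          have h1 : ((d : ℕ) : ZMod L) = (((d : ℕ) : ℤ) : ZMod L) := by push_cast; ring
          rw [h1, hd, hbez]
          push_cast [ZMod.natCast_self]
          ring
        intro t
        rw [hdz]
        exact hint (Nat.gcdB L 4) t
      have hnat : ∀ (m : ℕ) (t : ZMod L), v (f (t + (d : ZMod L) * (m : ZMod L))) = v (f t) := by
        intro m
        induction m with
        | zero => intro t; norm_num
        | succ n ih =>
            intro t
            have he : t + (d : ZMod L) * (((n : ℕ) + 1 : ℕ) : ZMod L) =
                (t + (d : ZMod L) * ((n : ℕ) : ZMod L)) + (d : ZMod L) := by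
              push_cast; ring
            rw [he, hdinv, ih]
      refine ⟨fun z => v (f ((z.val : ℕ) : ZMod L)), ?_⟩
      funext i
      show v (f (((g i).val : ℕ) : ZMod L)) = v i
      set x := (i : ZMod L) with hx
      have hgi : g i = ((x.val : ℕ) : ZMod d) := by
        show ZMod.castHom hdL (ZMod d) x = _
        rw [ZMod.castHom_apply, ← ZMod.natCast_val]
      have hgval : (g i).val = x.val % d := by rw [hgi, ZMod.val_natCast]
      have hxi : v i = v (f x) := by rw [hx, hcf]
      rw [hgval, hxi]
      have hsplit : x = (((x.val % d : ℕ) : ZMod L)) + (d : ZMod L) * (((x.val / d : ℕ) : ZMod L)) := by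
        have h2 : (x.val % d + d * (x.val / d) : ℕ) = x.val := Nat.mod_add_div _ _
        calc x = ((x.val : ℕ) : ZMod L) := (ZMod.natCast_rightInverse x).symm
          _ = (((x.val % d + d * (x.val / d) : ℕ)) : ZMod L) := by rw [h2]
          _ = _ := by rw [Nat.cast_add, Nat.cast_mul]
      have hfin := hnat (x.val / d) (((x.val % d : ℕ)) : ZMod L)
      rw [← hsplit] at hfin
      exact hfin.symm
  -- rank-nullity
  have hkerdim : Module.finrank (ZMod 2) (LinearMap.ker C.mulVecLin) = d := by
    rw [← hrange, LinearMap.finrank_range_of_inj hΦinj, Module.finrank_pi,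
      ZMod.card]
  have hrn := LinearMap.finrank_range_add_finrank_ker C.mulVecLin
  rw [hkerdim, Module.finrank_pi, Fintype.card_fin] at hrn
  have hrank : C.rank = Module.finrank (ZMod 2) (LinearMap.range C.mulVecLin) := rfl
  have hdle : d ≤ L := Nat.le_of_dvd hL0 hdL
  omega

/-- Rank over `F₂` of the `L × L` circulant matrix with ones exactly at positions
`i − j ≡ ±2 (mod L)`: it is `L − 1` for odd `L`, `L − 4` when `4 ∣ L`, and `L − 2`
when `L` is even but `4 ∤ L`; in particular it equals `4⌈L/4⌉ − 4` for even `L`. -/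
theorem rank_circulant_pm_two (L : ℕ) (hL : 4 < L)
    (C : Matrix (Fin L) (Fin L) (ZMod 2))
    (hC : ∀ i j : Fin L,
      C i j = if ((i : ZMod L) - (j : ZMod L) = 2 ∨ (i : ZMod L) - (j : ZMod L) = -2)
        then 1 else 0) :
    (Odd L → C.rank = L - 1) ∧
    (4 ∣ L → C.rank = L - 4) ∧
    (Even L → ¬ (4 ∣ L) → C.rank = L - 2) ∧
    (Even L → C.rank = 4 * ((L + 3) / 4) - 4) := by
  have hmain := rank_circ_aux L hL C hC
  have hdL : Nat.gcd L 4 ∣ L := Nat.gcd_dvd_left L 4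
  have hd4 : Nat.gcd L 4 ∣ 4 := Nat.gcd_dvd_right L 4
  have hdpos : 0 < Nat.gcd L 4 := Nat.gcd_pos_of_pos_left 4 (by omega)
  have hdle : Nat.gcd L 4 ≤ 4 := Nat.le_of_dvd (by norm_num) hd4
  have hdcases : Nat.gcd L 4 = 1 ∨ Nat.gcd L 4 = 2 ∨ Nat.gcd L 4 = 4 := by
    interval_cases h : Nat.gcd L 4 <;> simp_all <;> omega
  refine ⟨?_, ?_, ?_, ?_⟩
  · intro hodd
    rw [Nat.odd_iff] at hodd
    have h2 : ¬ (2 ∣ L) := by omega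
    rcases hdcases with h | h | h
    · rw [hmain, h]
    · rw [h] at hdL; omega
    · rw [h] at hdL; omega
  · intro h4
    have : (4 : ℕ) ∣ Nat.gcd L 4 := Nat.dvd_gcd h4 dvd_rfl
    have h : Nat.gcd L 4 = 4 := Nat.dvd_antisymm hd4 this
    rw [hmain, h]
  · intro heven h4
    have h2L : 2 ∣ L := heven.two_dvd
    have h2d : (2 : ℕ) ∣ Nat.gcd L 4 := Nat.dvd_gcd h2L (by norm_num)
    rcases hdcases with h | h | h
    · omega
    · rw [hmain, h]
    · rw [h] at hdL; exact absurd hdL h4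
  · intro heven
    have h2L : 2 ∣ L := heven.two_dvd
    have h2d : (2 : ℕ) ∣ Nat.gcd L 4 := Nat.dvd_gcd h2L (by norm_num)
    rcases hdcases with h | h | h
    · omega
    · rw [hmain, h]
      have : ¬ (4 ∣ L) := by
        intro h4
        have : (4 : ℕ) ∣ Nat.gcd L 4 := Nat.dvd_gcd h4 dvd_rfl
        omega
      omega
    · rw [hmain, h]
      rw [h] at hdL
      omega
end
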